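/- arXiv:2306.15750 — 9 statements merged into one kernel-verified Lean document; each statement's English description precedes it below -/
import Mathlib

section
/- Let n be a positive integer and σ a permutation of {1,...,n} satisfying σ(k) ≤ k+1 for all k. Write X(σ) = {s₁ < s₂ < ... < s_l} (with s_l = n) and set s₀ = 0. Then σ(s_{i+1}) = s_i + 1 for all i ∈ {0,1,...,l-1}. -/
/-- Let `σ` be a permutation of `{1,…,n}` (modeled as `Fin n`, `0`-indexed)
with `σ(k) ≤ k+1` for all `k`.  List the non-excedance set
`X(σ) = {k : σ(k) ≤ k}` in increasing order as `s₁ < … < s_l` and set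
`s₀ := 0`.  Then `σ(s_{i+1}) = s_i + 1` for `i = 0,…,l-1`.  In the
`0`-indexed model this reads: `σ(t i) = 0` if `i = 0` and
`σ(t i) = t (i-1) + 1` otherwise, where `t : Fin l ≃o X(σ)` is the order
isomorphism. -/
theorem miller_lemma_values_on_X (n : ℕ) (hn : 0 < n) (σ : Equiv.Perm (Fin n))
    (hσ : ∀ k : Fin n, (σ k : ℕ) ≤ (k : ℕ) + 1)
    (X : Finset (Fin n)) (hX : X = Finset.univ.filter (fun k : Fin n => (σ k : ℕ) ≤ (k : ℕ))) :
    ∀ i : Fin X.card,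
      (σ ((X.orderIsoOfFin rfl i : Fin n)) : ℕ) =
        if h0 : (i : ℕ) = 0 then 0
        else ((X.orderIsoOfFin rfl ⟨(i : ℕ) - 1, by have := i.2; omega⟩ : Fin n) : ℕ) + 1 := by
  have hmemX : ∀ k : Fin n, k ∈ X ↔ (σ k : ℕ) ≤ (k : ℕ) := by
    intro k; simp [hX]
  set t := X.orderIsoOfFin rfl with ht
  -- key : if k ∈ X and σ k ≠ 0 then σ k - 1 ∈ X
  have hpred : ∀ k : Fin n, k ∈ X → (σ k : ℕ) ≠ 0 →
      ∃ m : Fin n, m ∈ X ∧ (m : ℕ) + 1 = (σ k : ℕ) ∧ (m : ℕ) < (k : ℕ) := by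
    intro k hk hne
    have hk' := (hmemX k).1 hk
    have hlt : (σ k : ℕ) - 1 < n := by have := (σ k).2; omega
    refine ⟨⟨(σ k : ℕ) - 1, hlt⟩, ?_, by simp; omega, by simp; omega⟩
    set m : Fin n := ⟨(σ k : ℕ) - 1, hlt⟩ with hm
    by_contra hmem
    have h1 : (m : ℕ) < (σ m : ℕ) := by
      have := (hmemX m).not.1 hmem; omega
    have h2 := hσ m
    have h3 : (σ m : ℕ) = (σ k : ℕ) := by simp [hm] at h1 h2 ⊢; omega
    have h4 : m = k := σ.injective (Fin.ext h3)
    have : (m : ℕ) < (k : ℕ) := by simp [hm]; omega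
    omega
  suffices H : ∀ N : ℕ, ∀ i : Fin X.card, (i : ℕ) < N →
      (σ ((t i : Fin n)) : ℕ) =
        if h0 : (i : ℕ) = 0 then 0
        else ((t ⟨(i : ℕ) - 1, by have := i.2; omega⟩ : Fin n) : ℕ) + 1 by
    intro i; exact H ((i : ℕ) + 1) i (Nat.lt_succ_self _)
  intro N
  induction N with
  | zero => intro i hi; omega
  | succ N IH' =>
  intro i hiN
  have IH : ∀ j : Fin X.card, j < i → (σ ((t j : Fin n)) : ℕ) =
      if h0 : (j : ℕ) = 0 then 0
      else ((t ⟨(j : ℕ) - 1, by have := j.2; omega⟩ : Fin n) : ℕ) + 1 := by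
    intro j hji
    exact IH' j (by have := Fin.lt_def.1 hji; omega)
  have hti : ((t i : Fin n)) ∈ X := (t i).2
  have hti' : (σ (t i : Fin n) : ℕ) ≤ ((t i : Fin n) : ℕ) := (hmemX _).1 hti
  by_cases hz : (σ (t i : Fin n) : ℕ) = 0
  · by_cases h0 : (i : ℕ) = 0
    · rw [dif_pos h0]; exact hz
    · exfalso
      have hpos : 0 < X.card := lt_of_le_of_lt (Nat.zero_le _) i.2
      have hlt0 : (⟨0, hpos⟩ : Fin X.card) < i := by
        simp [Fin.lt_def]; omega
      have h00 := IH ⟨0, hpos⟩ hlt0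
      rw [dif_pos rfl] at h00
      have : σ (t ⟨0, hpos⟩ : Fin n) = σ (t i : Fin n) := Fin.ext (by omega)
      have heq : (t ⟨0, hpos⟩ : Fin n) = (t i : Fin n) := σ.injective this
      have : (⟨0, hpos⟩ : Fin X.card) = i := t.injective (Subtype.ext heq)
      exact h0 (by rw [← this])
  · obtain ⟨m, hmX, hm1, hm2⟩ := hpred _ hti hz
    set j : Fin X.card := t.symm ⟨m, hmX⟩ with hj
    have htj : (t j : Fin n) = m := by simp [hj]
    have hji : j < i := by
      refine t.lt_iff_lt.1 ?_
      rw [← Subtype.coe_lt_coe, htj]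
      exact Fin.lt_def.2 hm2
    have h0 : (i : ℕ) ≠ 0 := by
      have := Fin.lt_def.1 hji; omega
    rw [dif_neg h0]
    have hjval : (j : ℕ) = (i : ℕ) - 1 := by
      by_contra hne
      have hjlt : (j : ℕ) + 1 < (i : ℕ) := by have := Fin.lt_def.1 hji; omega
      set j' : Fin X.card := ⟨(j : ℕ) + 1, by omega⟩ with hj'
      have h := IH j' (Fin.lt_def.2 (by simp [hj']; omega))
      rw [dif_neg (by simp [hj'])] at h
      have hc : (⟨((j' : ℕ)) - 1, by have := j'.2; omega⟩ : Fin X.card) = j :=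
        Fin.ext (by simp [hj'])
      rw [hc, htj] at h
      have h1 : σ (t j' : Fin n) = σ (t i : Fin n) := Fin.ext (by omega)
      have h2 : (t j' : Fin n) = (t i : Fin n) := σ.injective h1
      have h3 : j' = i := t.injective (Subtype.ext h2)
      have h4 := congrArg Fin.val h3
      simp [hj'] at h4
      omega
    have hc2 : (⟨(i : ℕ) - 1, by have := i.2; omega⟩ : Fin X.card) = j :=
      Fin.ext (by simp [hjval])
    rw [hc2, htj]
    omega
end

section
/- Let n be a positive integer and σ a permutation of {1,...,n} satisfying σ(k) ≤ k+1 for all k. If X(σ) = {k : σ(k) ≤ k} has exactly l elements, then the sign of σ equals (-1)^{n-l}. -/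
private lemma miller_key (n : ℕ) : ∀ (m : ℕ) (σ : Equiv.Perm (Fin n)),
    (∀ k : Fin n, (σ k : ℕ) ≤ (k : ℕ) + 1) →
    (Finset.univ.filter (fun k : Fin n => (σ k : ℕ) = (k : ℕ) + 1)).card = m →
    Equiv.Perm.sign σ = (-1) ^ m := by
  intro m
  induction m with
  | zero =>
    intro σ hσ hA
    rw [Finset.card_eq_zero] at hA
    have h0 : ∀ k : Fin n, (σ k : ℕ) ≤ k := by
      intro k
      rcases (hσ k).lt_or_eq with h | h
      · omega
      · exfalso
        have : k ∈ Finset.univ.filter (fun k : Fin n => (σ k : ℕ) = (k : ℕ) + 1) := by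
          simp [h]
        rw [hA] at this
        exact absurd this (Finset.notMem_empty k)
    have hfix : ∀ j : ℕ, ∀ hj : j < n, σ ⟨j, hj⟩ = ⟨j, hj⟩ := by
      intro j
      induction j using Nat.strong_induction_on with
      | _ j ih =>
        intro hj
        have h1 : (σ ⟨j, hj⟩ : ℕ) ≤ j := h0 ⟨j, hj⟩
        rcases h1.lt_or_eq with h | h
        · exfalso
          have h2 : σ (σ ⟨j, hj⟩) = σ ⟨j, hj⟩ := by
            have := ih (σ ⟨j, hj⟩ : ℕ) h (σ ⟨j, hj⟩).isLt
            simpa using this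
          have h3 := σ.injective h2
          rw [Fin.ext_iff] at h3
          simp at h3
          omega
        · exact Fin.ext h
    have hid : σ = 1 := by
      ext k
      have := hfix k.val k.isLt
      simpa [Fin.ext_iff] using this
    simp [hid]
  | succ m ih =>
    intro σ hσ hA
    set A := Finset.univ.filter (fun k : Fin n => (σ k : ℕ) = (k : ℕ) + 1) with hAdef
    have hne : A.Nonempty := Finset.card_pos.mp (by omega)
    set k := A.max' hne with hkdef
    have hk : (σ k : ℕ) = (k : ℕ) + 1 := by
      have := A.max'_mem hne
      simpa [hAdef] using this
    have hlt : (k : ℕ) + 1 < n := by rw [← hk]; exact (σ k).isLt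
    set k' : Fin n := ⟨(k : ℕ) + 1, hlt⟩ with hk'def
    have hkk' : k ≠ k' := by simp [hk'def, Fin.ext_iff]
    have hσk' : (σ k' : ℕ) ≤ k := by
      have h1 := hσ k'
      have h2 : (σ k' : ℕ) ≠ (k : ℕ) + 2 := by
        intro h
        have hmem : k' ∈ A := by simp [hAdef, hk'def, h]; exact h
        have := A.le_max' k' hmem
        rw [← hkdef] at this
        rw [Fin.le_def] at this
        simp [hk'def] at this
      have h3 : (σ k' : ℕ) ≠ (k : ℕ) + 1 := by
        rw [← hk]
        intro h
        exact hkk'.symm (σ.injective (Fin.ext h))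
      have h4 : (k' : ℕ) = (k : ℕ) + 1 := rfl
      omega
    set σ' := σ * Equiv.swap k k' with hσ'def
    have hσ'k : σ' k = σ k' := by simp [hσ'def, Equiv.swap_apply_left]
    have hσ'k' : σ' k' = σ k := by simp [hσ'def, Equiv.swap_apply_right]
    have hσ'x : ∀ x, x ≠ k → x ≠ k' → σ' x = σ x := by
      intro x h1 h2
      simp [hσ'def, Equiv.swap_apply_of_ne_of_ne h1 h2]
    have hcond : ∀ x : Fin n, (σ' x : ℕ) ≤ (x : ℕ) + 1 := by
      intro x
      by_cases h1 : x = k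
      · subst h1; rw [hσ'k]; omega
      by_cases h2 : x = k'
      · subst h2; rw [hσ'k', hk]; simp [hk'def]
      · rw [hσ'x x h1 h2]; exact hσ x
    have hAeq : Finset.univ.filter (fun x : Fin n => (σ' x : ℕ) = (x : ℕ) + 1)
        = A.erase k := by
      ext x
      simp only [Finset.mem_filter, Finset.mem_univ, true_and, Finset.mem_erase, hAdef]
      by_cases h1 : x = k
      · subst h1
        rw [hσ'k]
        constructor
        · intro h; omega
        · rintro ⟨h, -⟩; exact absurd rfl h
      by_cases h2 : x = k'
      · subst h2
        rw [hσ'k', hk]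
        have h4 : (k' : ℕ) = (k : ℕ) + 1 := rfl
        constructor
        · intro h; omega
        · rintro ⟨-, h⟩; omega
      · rw [hσ'x x h1 h2]
        exact ⟨fun h => ⟨h1, h⟩, fun h => h.2⟩
    have hcard' : (Finset.univ.filter (fun x : Fin n => (σ' x : ℕ) = (x : ℕ) + 1)).card = m := by
      rw [hAeq, Finset.card_erase_of_mem (A.max'_mem hne), hA]
      simp
    have hsign' := ih σ' hcond hcard'
    have hback : σ = σ' * Equiv.swap k k' := by
      rw [hσ'def, mul_assoc, Equiv.swap_mul_self, mul_one]
    rw [hback, map_mul, hsign', Equiv.Perm.sign_swap hkk']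
    rw [pow_add, pow_one, mul_comm]

/-- If `σ` is a permutation of `{1,…,n}` (modeled as `Fin n`) with
`σ(k) ≤ k+1` for all `k`, and `X(σ) = {k : σ(k) ≤ k}` has `l` elements,
then `sign σ = (-1)^(n-l)`. -/
theorem miller_lemma_sign (n : ℕ) (hn : 0 < n) (σ : Equiv.Perm (Fin n))
    (hσ : ∀ k : Fin n, (σ k : ℕ) ≤ (k : ℕ) + 1) :
    Equiv.Perm.sign σ =
      (-1) ^ (n - (Finset.univ.filter (fun k : Fin n => (σ k : ℕ) ≤ (k : ℕ))).card) := by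
  have hpart : (Finset.univ.filter (fun k : Fin n => (σ k : ℕ) ≤ (k : ℕ))).card
      + (Finset.univ.filter (fun k : Fin n => (σ k : ℕ) = (k : ℕ) + 1)).card = n := by
    have heq : Finset.univ.filter (fun k : Fin n => (σ k : ℕ) = (k : ℕ) + 1)
        = Finset.univ.filter (fun k : Fin n => ¬ ((σ k : ℕ) ≤ (k : ℕ))) := by
      apply Finset.filter_congr
      intro k _
      have := hσ k
      constructor
      · intro h; omega
      · intro h; omega
    rw [heq, Finset.card_filter_add_card_filter_not]
    simp
  apply miller_key n _ σ hσ
  omega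
end

section
/- The map σ ↦ X(σ) := {k ∈ [n] : σ(k) ≤ k} is a bijection between the set of permutations σ of {1,...,n} satisfying σ(k) ≤ k+1 for all k, and the set of subsets of {1,...,n} that contain n. -/
/-- `pval S k` is one plus the largest element of `S` below `k`, or `0` if none. -/
private def pval {n : ℕ} (S : Finset (Fin n)) (k : Fin n) : ℕ :=
  (S.filter fun x : Fin n => (x : ℕ) < (k : ℕ)).sup fun x => (x : ℕ) + 1

private lemma pval_le {n : ℕ} (S : Finset (Fin n)) (k : Fin n) : pval S k ≤ (k : ℕ) :=
  Finset.sup_le fun x hx => by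
    simp only [Finset.mem_filter] at hx; omega

private lemma le_pval {n : ℕ} {S : Finset (Fin n)} {x k : Fin n}
    (hx : x ∈ S) (hxk : (x : ℕ) < (k : ℕ)) : (x : ℕ) + 1 ≤ pval S k :=
  Finset.le_sup (f := fun x : Fin n => (x : ℕ) + 1)
    (Finset.mem_filter.mpr ⟨hx, hxk⟩)

private lemma pval_eq_succ {n : ℕ} {S : Finset (Fin n)} {k : Fin n} (h : pval S k ≠ 0) :
    ∃ m : Fin n, m ∈ S ∧ (m : ℕ) < (k : ℕ) ∧ pval S k = (m : ℕ) + 1 := by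
  have hne : (S.filter fun x : Fin n => (x : ℕ) < (k : ℕ)).Nonempty := by
    rcases Finset.eq_empty_or_nonempty (S.filter fun x : Fin n => (x : ℕ) < (k : ℕ)) with he | hne
    · exfalso; apply h; unfold pval; rw [he]; simp
    · exact hne
  set F := S.filter fun x : Fin n => (x : ℕ) < (k : ℕ) with hF
  set m := F.max' hne with hmdef
  have hm : m ∈ F := F.max'_mem hne
  have hm' := hm
  simp only [hF, Finset.mem_filter] at hm'
  refine ⟨m, hm'.1, hm'.2, ?_⟩
  apply le_antisymm
  · apply Finset.sup_le
    intro x hx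
    have h1 : x ≤ m := F.le_max' x hx
    have h2 : (x : ℕ) ≤ (m : ℕ) := h1
    omega
  · exact le_pval hm'.1 hm'.2

/-- Canonical-form lemma: for a permutation with `σ k ≤ k + 1` everywhere,
if `σ k ≤ k` then `σ k` is forced to be `pval X k` where `X` is the excedance-free set. -/
private lemma canon {n : ℕ} (σ : Equiv.Perm (Fin n))
    (hσ : ∀ k : Fin n, (σ k : ℕ) ≤ (k : ℕ) + 1)
    {k : Fin n} (hk : (σ k : ℕ) ≤ (k : ℕ)) :
    (σ k : ℕ) = pval (Finset.univ.filter fun j : Fin n => (σ j : ℕ) ≤ (j : ℕ)) k := by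
  set S := Finset.univ.filter fun j : Fin n => (σ j : ℕ) ≤ (j : ℕ) with hS
  have hmemS : ∀ j : Fin n, j ∈ S ↔ (σ j : ℕ) ≤ (j : ℕ) := by
    intro j; simp [hS]
  have ha : ∀ j : Fin n, j ∉ S → (σ j : ℕ) = (j : ℕ) + 1 := by
    intro j hj; have := hσ j; rw [hmemS] at hj; omega
  have hub : (σ k : ℕ) ≤ pval S k := by
    by_contra hcon
    push_neg at hcon
    have h1 : 1 ≤ (σ k : ℕ) := by omega
    have hjn : (σ k : ℕ) - 1 < n := by have := (σ k).isLt; omega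
    set j : Fin n := ⟨(σ k : ℕ) - 1, hjn⟩ with hj
    have hjk : (j : ℕ) < (k : ℕ) := by simp only [hj]; omega
    have hjS : j ∉ S := by
      intro hmem
      have hle : (j : ℕ) + 1 ≤ pval S k := le_pval hmem hjk
      simp only [hj] at hle
      omega
    have hval : (σ j : ℕ) = (σ k : ℕ) := by
      rw [ha j hjS]; simp only [hj]; omega
    have : j = k := σ.injective (Fin.ext hval)
    rw [this] at hjk; omega
  have hlb : pval S k ≤ (σ k : ℕ) := by
    rcases Nat.eq_zero_or_pos (pval S k) with h0 | hpos
    · omega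
    obtain ⟨m, hmS, hmk, hpm⟩ := pval_eq_succ (S := S) (k := k) (by omega)
    set T := Finset.univ.filter fun x : Fin n => (x : ℕ) ≤ (m : ℕ) with hT
    have hmaps : ∀ x ∈ T, σ x ∈ T := by
      intro x hx
      simp only [hT, Finset.mem_filter, Finset.mem_univ, true_and] at hx ⊢
      by_cases hxS : x ∈ S
      · have := (hmemS x).mp hxS; omega
      · have hx1 := ha x hxS
        have hxm : (x : ℕ) ≠ (m : ℕ) := by
          intro he; exact hxS (by rwa [show x = m from Fin.ext he])
        omega
    have himg : T.image σ = T := by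
      apply Finset.eq_of_subset_of_card_le
      · intro y hy
        simp only [Finset.mem_image] at hy
        obtain ⟨x, hx, rfl⟩ := hy
        exact hmaps x hx
      · rw [Finset.card_image_of_injective _ σ.injective]
    by_contra hcon
    push_neg at hcon
    have hσkT : σ k ∈ T := by
      simp only [hT, Finset.mem_filter, Finset.mem_univ, true_and]; omega
    rw [← himg] at hσkT
    simp only [Finset.mem_image] at hσkT
    obtain ⟨x, hx, hxe⟩ := hσkT
    have hxk : x = k := σ.injective hxe
    subst hxk
    simp only [hT, Finset.mem_filter, Finset.mem_univ, true_and] at hx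
    omega
  omega

/-- The map `σ ↦ X(σ) = {k : σ(k) ≤ k}` is a bijection between the set of
permutations of `{1,…,n}` (modeled as `Fin n`) satisfying `σ(k) ≤ k+1` for
all `k`, and the set of subsets of `{1,…,n}` containing `n` (the largest
element of `Fin n`). -/
theorem miller_remark_bijection (n : ℕ) (hn : 0 < n) :
    Set.BijOn (fun σ : Equiv.Perm (Fin n) =>
        Finset.univ.filter (fun k : Fin n => (σ k : ℕ) ≤ (k : ℕ)))
      {σ : Equiv.Perm (Fin n) | ∀ k : Fin n, (σ k : ℕ) ≤ (k : ℕ) + 1}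
      {S : Finset (Fin n) | (⟨n - 1, by omega⟩ : Fin n) ∈ S} := by
  refine ⟨?_, ?_, ?_⟩
  · -- MapsTo
    intro σ hσ
    simp only [Set.mem_setOf_eq, Finset.mem_filter, Finset.mem_univ, true_and]
    have h1 := (σ ⟨n - 1, by omega⟩).isLt
    show (σ ⟨n - 1, by omega⟩ : ℕ) ≤ n - 1
    omega
  · -- InjOn
    intro σ hσ τ hτ he
    simp only [Set.mem_setOf_eq] at hσ hτ
    dsimp only at he
    ext k
    by_cases hk : (σ k : ℕ) ≤ (k : ℕ)
    · have hk' : (τ k : ℕ) ≤ (k : ℕ) := by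
        have : k ∈ Finset.univ.filter fun j : Fin n => (τ j : ℕ) ≤ (j : ℕ) := by
          rw [← he]; exact Finset.mem_filter.mpr ⟨Finset.mem_univ k, hk⟩
        simpa using this
      have e1 := canon σ hσ hk
      have e2 := canon τ hτ hk'
      rw [e1, e2, he]
    · have hk' : ¬ (τ k : ℕ) ≤ (k : ℕ) := by
        intro hc
        have : k ∈ Finset.univ.filter fun j : Fin n => (σ j : ℕ) ≤ (j : ℕ) := by
          rw [he]; exact Finset.mem_filter.mpr ⟨Finset.mem_univ k, hc⟩
        simp at this
        omega
      have := hσ k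
      have := hτ k
      omega
  · -- SurjOn
    intro S hS
    simp only [Set.mem_setOf_eq] at hS
    have hf : ∀ k : Fin n, k ∉ S → (k : ℕ) + 1 < n := by
      intro k hk
      have hlt := k.isLt
      rcases Nat.lt_or_ge ((k : ℕ) + 1) n with h | h
      · exact h
      · exfalso
        apply hk
        have h1 : (k : ℕ) = n - 1 := by omega
        have h2 : k = ⟨n - 1, by omega⟩ := Fin.ext h1
        rwa [h2]
    set f : Fin n → Fin n := fun k =>
      if h : k ∈ S then ⟨pval S k, lt_of_le_of_lt (pval_le S k) k.isLt⟩
      else ⟨(k : ℕ) + 1, hf k h⟩ with hfdef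
    have hfS : ∀ k ∈ S, (f k : ℕ) = pval S k := by
      intro k hk; simp only [hfdef, dif_pos hk]
    have hfNS : ∀ k : Fin n, k ∉ S → (f k : ℕ) = (k : ℕ) + 1 := by
      intro k hk; simp only [hfdef, dif_neg hk]
    have hinj : Function.Injective f := by
      intro a b hab
      have habv : (f a : ℕ) = (f b : ℕ) := congrArg Fin.val hab
      by_cases hA : a ∈ S <;> by_cases hB : b ∈ S
      · rw [hfS a hA, hfS b hB] at habv
        rcases lt_trichotomy (a : ℕ) (b : ℕ) with h | h | h
        · exfalso
          have h1 : (a : ℕ) + 1 ≤ pval S b := le_pval hA h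
          have h2 := pval_le S a
          omega
        · exact Fin.ext h
        · exfalso
          have h1 : (b : ℕ) + 1 ≤ pval S a := le_pval hB h
          have h2 := pval_le S b
          omega
      · exfalso
        rw [hfS a hA, hfNS b hB] at habv
        obtain ⟨m, hmS, _, hpm⟩ := pval_eq_succ (S := S) (k := a) (by omega)
        have hbm : (b : ℕ) = (m : ℕ) := by omega
        exact hB (by rwa [show b = m from Fin.ext hbm])
      · exfalso
        rw [hfNS a hA, hfS b hB] at habv
        obtain ⟨m, hmS, _, hpm⟩ := pval_eq_succ (S := S) (k := b) (by omega)
        have ham : (a : ℕ) = (m : ℕ) := by omega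
        exact hA (by rwa [show a = m from Fin.ext ham])
      · rw [hfNS a hA, hfNS b hB] at habv
        exact Fin.ext (by omega)
    have hbij : Function.Bijective f := Finite.injective_iff_bijective.mp hinj
    refine ⟨Equiv.ofBijective f hbij, ?_, ?_⟩
    · intro k
      show (f k : ℕ) ≤ (k : ℕ) + 1
      by_cases h : k ∈ S
      · rw [hfS k h]; have := pval_le S k; omega
      · rw [hfNS k h]
    · dsimp only
      ext k
      simp only [Finset.mem_filter, Finset.mem_univ, true_and]
      show (f k : ℕ) ≤ (k : ℕ) ↔ k ∈ S
      constructor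
      · intro hle
        by_contra hk
        rw [hfNS k hk] at hle
        omega
      · intro hk
        rw [hfS k hk]
        exact pval_le S k
end

section
/- (Generalized Trudi formula) Let A = [a_{i,j}] be an n×n complex Hessenberg matrix, i.e., a_{i,j} = 0 whenever j > i+1. Then det(A) = Σ_{l=1}^{n} (-1)^{n-l} Σ_{{s₁<...<s_l} ⊆ [n], s_l = n} ( Π_{q=1}^{l} a_{s_q, s_{q-1}+1} · Π_{k ∈ [n] \ {s₁,...,s_l}} a_{k,k+1} ), where s₀ := 0. -/
open Finset

/-- The inner product term of the Trudi formula, for a subset `S`. -/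
noncomputable def trudP (a : ℕ → ℕ → ℂ) (S : Finset ℕ) : ℂ :=
  ∏ q ∈ Finset.range S.card,
    a ((S.sort (· ≤ ·)).getD q 0)
      ((if q = 0 then 0 else (S.sort (· ≤ ·)).getD (q - 1) 0) + 1)

noncomputable def trudT (a : ℕ → ℕ → ℂ) (n : ℕ) (S : Finset ℕ) : ℂ :=
  (-1 : ℂ) ^ (n - S.card) * (trudP a S * ∏ k ∈ Finset.Icc 1 n \ S, a k (k + 1))

noncomputable def trudG (a : ℕ → ℕ → ℂ) (n : ℕ) : ℂ :=
  ∑ S ∈ (Finset.Icc 1 n).powerset.filter (fun S => n ∈ S), trudT a n S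

lemma sort_insert_max {T : Finset ℕ} {b : ℕ} (hb : ∀ x ∈ T, x < b) :
    (insert b T).sort (· ≤ ·) = T.sort (· ≤ ·) ++ [b] := by
  have hbT : b ∉ T := fun h => lt_irrefl b (hb b h)
  have hperm : List.Perm ((insert b T).sort (· ≤ ·)) (T.sort (· ≤ ·) ++ [b]) := by
    rw [← Multiset.coe_eq_coe]
    have h1 : ((insert b T).sort (· ≤ ·) : Multiset ℕ) = (insert b T).val := sort_eq _ _
    have h2 : (T.sort (· ≤ ·) : Multiset ℕ) = T.val := sort_eq _ _
    rw [h1]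
    have h3 : (↑(T.sort (· ≤ ·) ++ [b]) : Multiset ℕ) = ↑(T.sort (· ≤ ·)) + ([b] : List ℕ) :=
      rfl
    rw [h3, h2, Finset.insert_val, Multiset.ndinsert_of_notMem hbT]
    have : (([b] : List ℕ) : Multiset ℕ) = ({b} : Multiset ℕ) := rfl
    rw [this, ← Multiset.singleton_add, add_comm]
  have hs2 : List.Pairwise (· ≤ ·) (T.sort (· ≤ ·) ++ [b]) := by
    rw [List.pairwise_append]
    refine ⟨Finset.pairwise_sort _ _, List.pairwise_singleton _ _, ?_⟩
    intro x hx y hy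
    rw [List.mem_singleton] at hy
    subst hy
    exact (hb x ((mem_sort _).mp hx)).le
  exact List.Perm.eq_of_pairwise' (Finset.pairwise_sort _ _) hs2 hperm

lemma sorted_getD_last {T : Finset ℕ} (hT : T.Nonempty) :
    (T.sort (· ≤ ·)).getD (T.card - 1) 0 = T.max' hT := by
  have hlen : (T.sort (· ≤ ·)).length = T.card := Finset.length_sort _
  have hlt : T.card - 1 < (T.sort (· ≤ ·)).length := by
    rw [hlen]; exact Nat.sub_lt (Finset.card_pos.mpr hT) Nat.zero_lt_one
  rw [List.getD_eq_getElem?_getD, List.getElem?_eq_getElem hlt, Option.getD_some]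
  have := Finset.max'_eq_sorted_last (s := T) (h := hT)
  rw [this]
  congr 1
  omega


def maxd (T : Finset ℕ) : ℕ := if h : T.Nonempty then T.max' h else 0

lemma trudT_insert (a : ℕ → ℕ → ℂ) {m n : ℕ} (hm1 : 1 ≤ m) (hmn : m ≤ n) {T : Finset ℕ}
    (hmT : m ∈ T) (hTm : T ⊆ Finset.Icc 1 m) :
    trudT a (n + 1) (insert (n + 1) T) =
      (-1 : ℂ) ^ (n - m) * a (n + 1) (m + 1) *
        (∏ k ∈ Finset.Ico (m + 1) (n + 1), a k (k + 1)) * trudT a m T := by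
  have hlt : ∀ x ∈ T, x < n + 1 := fun x hx => by
    have := hTm hx; rw [Finset.mem_Icc] at this; omega
  have hnT : (n + 1) ∉ T := fun h => by have := hlt _ h; omega
  have hcard : (insert (n + 1) T).card = T.card + 1 := Finset.card_insert_of_notMem hnT
  have hsort : (insert (n + 1) T).sort (· ≤ ·) = T.sort (· ≤ ·) ++ [n + 1] := sort_insert_max hlt
  have hlen : (T.sort (· ≤ ·)).length = T.card := Finset.length_sort _
  have hTne : T.Nonempty := ⟨m, hmT⟩
  have hcardpos : 1 ≤ T.card := Finset.card_pos.mpr hTne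
  have hmax : T.max' hTne = m :=
    le_antisymm (Finset.max'_le T hTne m (fun x hx => by
      have := hTm hx; rw [Finset.mem_Icc] at this; omega)) (Finset.le_max' _ _ hmT)
  have hcardm : T.card ≤ m := by
    have := Finset.card_le_card hTm
    rw [Nat.card_Icc] at this; omega
  have hgetlt : ∀ q < T.card,
      ((insert (n + 1) T).sort (· ≤ ·)).getD q 0 = (T.sort (· ≤ ·)).getD q 0 := by
    intro q hq
    rw [hsort, List.getD_eq_getElem?_getD, List.getD_eq_getElem?_getD,
      List.getElem?_append_left (by rw [hlen]; omega)]
  have hgetlast : ((insert (n + 1) T).sort (· ≤ ·)).getD T.card 0 = n + 1 := by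
    rw [hsort, List.getD_eq_getElem?_getD, List.getElem?_append_right (by rw [hlen])]
    simp [hlen]
  have hP : trudP a (insert (n + 1) T) = trudP a T * a (n + 1) (m + 1) := by
    rw [trudP, trudP, hcard, Finset.prod_range_succ]
    congr 1
    · refine Finset.prod_congr rfl fun q hq => ?_
      rw [Finset.mem_range] at hq
      rw [hgetlt q hq]
      congr 2
      rcases Nat.eq_zero_or_pos q with h0 | h0
      · simp [h0]
      · rw [if_neg (by omega), if_neg (by omega), hgetlt (q - 1) (by omega)]
    · rw [hgetlast, if_neg (by omega), hgetlt (T.card - 1) (by omega),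
        sorted_getD_last hTne, hmax]
  have hsd : Finset.Icc 1 (n + 1) \ insert (n + 1) T
      = (Finset.Icc 1 m \ T) ∪ Finset.Ico (m + 1) (n + 1) := by
    ext x
    simp only [Finset.mem_sdiff, Finset.mem_union, Finset.mem_insert, Finset.mem_Icc,
      Finset.mem_Ico, not_or]
    constructor
    · rintro ⟨⟨hx1, hx2⟩, hne1, hne2⟩
      by_cases hx : x ≤ m
      · exact Or.inl ⟨⟨hx1, hx⟩, hne2⟩
      · exact Or.inr ⟨by omega, by omega⟩
    · rintro (⟨⟨hx1, hx2⟩, hxT⟩ | ⟨hx1, hx2⟩)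
      · exact ⟨⟨hx1, by omega⟩, by omega, hxT⟩
      · refine ⟨⟨by omega, by omega⟩, by omega, fun hxT => ?_⟩
        have := hTm hxT; rw [Finset.mem_Icc] at this; omega
  have hdisj : Disjoint (Finset.Icc 1 m \ T) (Finset.Ico (m + 1) (n + 1)) := by
    rw [Finset.disjoint_left]
    intro x hx hx'
    rw [Finset.mem_sdiff, Finset.mem_Icc] at hx
    rw [Finset.mem_Ico] at hx'
    omega
  have hsign : ((-1 : ℂ)) ^ (n + 1 - (insert (n + 1) T).card)
      = (-1 : ℂ) ^ (n - m) * (-1 : ℂ) ^ (m - T.card) := by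
    rw [hcard, show n + 1 - (T.card + 1) = (n - m) + (m - T.card) by omega, pow_add]
  rw [trudT, trudT, hP, hsd, Finset.prod_union hdisj, hsign]
  ring

theorem trudG_rec (a : ℕ → ℕ → ℂ) (n : ℕ) :
    trudG a (n + 1) = ∑ m ∈ Finset.range (n + 1),
      (-1 : ℂ) ^ (n - m) * a (n + 1) (m + 1) *
        (∏ k ∈ Finset.Ico (m + 1) (n + 1), a k (k + 1)) *
        (if m = 0 then 1 else trudG a m) := by
  have step1 : trudG a (n + 1) =
      ∑ T ∈ (Finset.Icc 1 n).powerset, trudT a (n + 1) (insert (n + 1) T) := by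
    rw [trudG]
    refine Finset.sum_nbij' (fun S => S.erase (n + 1)) (fun T => insert (n + 1) T)
      ?_ ?_ ?_ ?_ ?_
    · intro S hS
      rw [Finset.mem_filter, Finset.mem_powerset] at hS
      rw [Finset.mem_powerset]
      intro x hx
      rw [Finset.mem_erase] at hx
      have h1 := hS.1 hx.2
      have h2 := hx.1
      rw [Finset.mem_Icc] at h1 ⊢
      omega
    · intro T hT
      rw [Finset.mem_powerset] at hT
      rw [Finset.mem_filter, Finset.mem_powerset]
      refine ⟨?_, Finset.mem_insert_self _ _⟩
      intro x hx
      rw [Finset.mem_insert] at hx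
      rcases hx with rfl | hx
      · rw [Finset.mem_Icc]; omega
      · have := hT hx; rw [Finset.mem_Icc] at this ⊢; omega
    · intro S hS
      rw [Finset.mem_filter] at hS
      exact Finset.insert_erase hS.2
    · intro T hT
      rw [Finset.mem_powerset] at hT
      apply Finset.erase_insert
      intro hmem
      have := hT hmem; rw [Finset.mem_Icc] at this; omega
    · intro S hS
      rw [Finset.mem_filter] at hS
      rw [Finset.insert_erase hS.2]
  have hmaps : ∀ T ∈ (Finset.Icc 1 n).powerset, maxd T ∈ Finset.range (n + 1) := by
    intro T hT
    rw [Finset.mem_powerset] at hT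
    rw [Finset.mem_range, maxd]
    split_ifs with h
    · have := hT (T.max'_mem h); rw [Finset.mem_Icc] at this; omega
    · omega
  rw [step1, ← Finset.sum_fiberwise_of_maps_to hmaps]
  refine Finset.sum_congr rfl fun m hm => ?_
  rw [Finset.mem_range] at hm
  rcases Nat.eq_zero_or_pos m with rfl | hm1
  · have hfib : (Finset.Icc 1 n).powerset.filter (fun T => maxd T = 0) = {∅} := by
      ext T
      rw [Finset.mem_filter, Finset.mem_powerset, Finset.mem_singleton]
      constructor
      · rintro ⟨hsub, hmax⟩
        rcases T.eq_empty_or_nonempty with rfl | hne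
        · rfl
        · exfalso
          rw [maxd, dif_pos hne] at hmax
          have := hsub (T.max'_mem hne)
          rw [Finset.mem_Icc] at this
          omega
      · rintro rfl
        exact ⟨Finset.empty_subset _, by rw [maxd, dif_neg Finset.not_nonempty_empty]⟩
    rw [hfib, Finset.sum_singleton, if_pos rfl, trudT, trudP]
    have hset : Finset.Icc 1 (n + 1) \ insert (n + 1) (∅ : Finset ℕ) = Finset.Icc 1 n := by
      ext x
      simp only [Finset.mem_sdiff, Finset.mem_insert, Finset.mem_Icc, Finset.notMem_empty,
        or_false]
      omega
    have hico : Finset.Ico (0 + 1) (n + 1) = Finset.Icc 1 n := by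
      rw [Finset.Ico_add_one_right_eq_Icc]
    have hc : (insert (n + 1) (∅ : Finset ℕ)).card = 1 := by simp
    rw [hset, hico, hc]
    have hs : (insert (n + 1) (∅ : Finset ℕ)).sort (· ≤ ·) = [n + 1] := by
      simp
    rw [hs]
    simp only [Finset.prod_range_one, reduceIte, List.getD_cons_zero, Nat.add_sub_cancel,
      Nat.sub_zero, Nat.zero_add, mul_one]
    ring
  · have hfib : (Finset.Icc 1 n).powerset.filter (fun T => maxd T = m)
        = (Finset.Icc 1 m).powerset.filter (fun T => m ∈ T) := by
      ext T
      rw [Finset.mem_filter, Finset.mem_powerset, Finset.mem_filter, Finset.mem_powerset]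
      constructor
      · rintro ⟨hsub, hmax⟩
        rcases T.eq_empty_or_nonempty with rfl | hne
        · exfalso; rw [maxd, dif_neg Finset.not_nonempty_empty] at hmax; omega
        · rw [maxd, dif_pos hne] at hmax
          have hmT : m ∈ T := hmax ▸ T.max'_mem hne
          refine ⟨fun x hx => ?_, hmT⟩
          have h1 := hsub hx
          have h2 := Finset.le_max' T x hx
          rw [hmax] at h2
          rw [Finset.mem_Icc] at h1 ⊢
          omega
      · rintro ⟨hsub, hmT⟩
        have hne : T.Nonempty := ⟨m, hmT⟩
        constructor
        · intro x hx
          have := hsub hx; rw [Finset.mem_Icc] at this ⊢; omega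
        · rw [maxd, dif_pos hne]
          refine le_antisymm (Finset.max'_le T hne m (fun x hx => ?_)) (Finset.le_max' _ _ hmT)
          have := hsub hx; rw [Finset.mem_Icc] at this; omega
    rw [hfib, if_neg (by omega), trudG]
    rw [Finset.sum_congr rfl (fun T hT => ?_), ← Finset.mul_sum]
    · rw [Finset.mem_filter, Finset.mem_powerset] at hT
      rw [trudT_insert a hm1 (by omega) hT.2 hT.1]


lemma det_minor (a : ℕ → ℕ → ℂ) (n : ℕ)
    (ha : ∀ i j : ℕ, 1 ≤ i → i ≤ n + 1 → 1 ≤ j → j ≤ n + 1 → i + 1 < j → a i j = 0)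
    (j : Fin (n + 1)) :
    ((Matrix.of fun i k : Fin (n + 1) => a ((i : ℕ) + 1) ((k : ℕ) + 1)).submatrix
        Fin.castSucc j.succAbove).det =
      (Matrix.of fun i k : Fin (j : ℕ) => a ((i : ℕ) + 1) ((k : ℕ) + 1)).det *
        ∏ k ∈ Finset.Ico ((j : ℕ) + 1) (n + 1), a k (k + 1) := by
  have hsa : ∀ k : Fin n, ((j.succAbove k : Fin (n + 1)) : ℕ)
      = if (k : ℕ) < (j : ℕ) then (k : ℕ) else (k : ℕ) + 1 := by
    intro k
    rw [Fin.succAbove]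
    by_cases h : (k : ℕ) < (j : ℕ)
    · rw [if_pos (show Fin.castSucc k < j by rwa [Fin.lt_def, Fin.coe_castSucc]), if_pos h,
        Fin.coe_castSucc]
    · rw [if_neg (show ¬ Fin.castSucc k < j by rwa [Fin.lt_def, Fin.coe_castSucc]), if_neg h,
        Fin.val_succ]
  set N := ((Matrix.of fun i k : Fin (n + 1) => a ((i : ℕ) + 1) ((k : ℕ) + 1)).submatrix
      Fin.castSucc j.succAbove) with hN
  have hNentry : ∀ i k : Fin n, N i k
      = a ((i : ℕ) + 1) ((if (k : ℕ) < (j : ℕ) then (k : ℕ) else (k : ℕ) + 1) + 1) := by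
    intro i k
    rw [hN, Matrix.submatrix_apply, Matrix.of_apply, Fin.coe_castSucc, hsa]
  have hj : (j : ℕ) ≤ n := Nat.lt_succ_iff.mp j.isLt
  rw [Matrix.twoBlockTriangular_det' N (fun i => (i : ℕ) < (j : ℕ)) ?hz]
  case hz =>
    intro i hi k hk
    have hi2 := i.isLt
    have hk2 := k.isLt
    rw [hNentry, if_neg hk]
    exact ha _ _ (by omega) (by omega) (by omega) (by omega) (by omega)
  congr 1
  · -- top-left block
    let e : Fin (j : ℕ) ≃ { i : Fin n // (i : ℕ) < (j : ℕ) } :=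
      { toFun := fun x => ⟨⟨(x : ℕ), lt_of_lt_of_le x.isLt hj⟩, x.isLt⟩
        invFun := fun i => ⟨((i : Fin n) : ℕ), i.2⟩
        left_inv := fun x => by ext; rfl
        right_inv := fun i => by ext; rfl }
    rw [← Matrix.det_submatrix_equiv_self e (Matrix.toSquareBlockProp N
      (fun i : Fin n => (i : ℕ) < (j : ℕ)))]
    congr 1
    ext i k
    rw [Matrix.submatrix_apply, Matrix.toSquareBlockProp_def, Matrix.of_apply, hNentry,
      Matrix.of_apply]
    have hk : ((e k : { i : Fin n // (i : ℕ) < (j : ℕ) }) : Fin n) = ⟨(k : ℕ), lt_of_lt_of_le k.isLt hj⟩ := rfl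
    rw [hk]
    simp only [if_pos k.isLt]
    rfl
  · -- bottom-right block, lower triangular
    rw [Matrix.det_of_lowerTriangular _ ?hlt]
    case hlt =>
      intro i k hik
      have hik' : ((i : Fin n) : ℕ) < ((k : Fin n) : ℕ) := hik
      have hi2 := (i : Fin n).isLt
      have hk2 := (k : Fin n).isLt
      rw [Matrix.toSquareBlockProp_def, Matrix.of_apply, hNentry, if_neg k.2]
      exact ha _ _ (by omega) (by omega) (by omega) (by omega) (by omega)
    have h1 : ∀ i : { i : Fin n // ¬ (i : ℕ) < (j : ℕ) },
        (Matrix.toSquareBlockProp N (fun i : Fin n => ¬ (i : ℕ) < (j : ℕ))) i i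
          = a ((i : ℕ) + 1) ((i : ℕ) + 2) := by
      intro i
      rw [Matrix.toSquareBlockProp_def, Matrix.of_apply, hNentry, if_neg i.2]
    rw [Fintype.prod_congr _ _ h1]
    rw [← Finset.prod_subtype (Finset.univ.filter fun i : Fin n => ¬ (i : ℕ) < (j : ℕ))
      (fun x => by simp) (fun i : Fin n => a ((i : ℕ) + 1) ((i : ℕ) + 2))]
    rw [Finset.prod_filter]
    rw [Fin.prod_univ_eq_prod_range (fun k => if ¬ k < (j : ℕ) then a (k + 1) (k + 2) else 1) n]
    rw [← Finset.prod_filter]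
    have hfil : (Finset.range n).filter (fun k => ¬ k < (j : ℕ)) = Finset.Ico (j : ℕ) n := by
      ext x
      simp only [Finset.mem_filter, Finset.mem_range, Finset.mem_Ico, not_lt]
      omega
    rw [hfil]
    rw [← Finset.prod_Ico_add' (fun k => a k (k + 1)) (j : ℕ) n 1]

theorem det_rec (a : ℕ → ℕ → ℂ) (n : ℕ)
    (ha : ∀ i j : ℕ, 1 ≤ i → i ≤ n + 1 → 1 ≤ j → j ≤ n + 1 → i + 1 < j → a i j = 0) :
    (Matrix.of fun i j : Fin (n+1) => a ((i : ℕ) + 1) ((j : ℕ) + 1)).det =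
      ∑ m ∈ Finset.range (n + 1),
      (-1 : ℂ) ^ (n - m) * a (n + 1) (m + 1) *
        (∏ k ∈ Finset.Ico (m + 1) (n + 1), a k (k + 1)) *
        (Matrix.of fun i j : Fin m => a ((i : ℕ) + 1) ((j : ℕ) + 1)).det := by
  rw [Matrix.det_succ_row _ (Fin.last n)]
  rw [← Fin.sum_univ_eq_sum_range (fun m => (-1 : ℂ) ^ (n - m) * a (n + 1) (m + 1) *
      (∏ k ∈ Finset.Ico (m + 1) (n + 1), a k (k + 1)) *
      (Matrix.of fun i j : Fin m => a ((i : ℕ) + 1) ((j : ℕ) + 1)).det) (n + 1)]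
  refine Finset.sum_congr rfl fun j _ => ?_
  rw [Fin.succAbove_last, det_minor a n ha j]
  rw [Matrix.of_apply, Fin.val_last]
  have hj : (j : ℕ) ≤ n := Nat.lt_succ_iff.mp j.isLt
  have hsign : ((-1 : ℂ)) ^ (n + (j : ℕ)) = (-1 : ℂ) ^ (n - (j : ℕ)) := by
    rw [show n + (j : ℕ) = (n - (j : ℕ)) + 2 * (j : ℕ) by omega, pow_add, pow_mul]
    simp
  rw [hsign]
  ring

theorem det_eq_trudG (a : ℕ → ℕ → ℂ) (n : ℕ)
    (ha : ∀ i j : ℕ, 1 ≤ i → i ≤ n + 1 → 1 ≤ j → j ≤ n + 1 → i + 1 < j → a i j = 0) :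
    (Matrix.of fun i j : Fin (n+1) => a ((i : ℕ) + 1) ((j : ℕ) + 1)).det = trudG a (n + 1) := by
  induction n using Nat.strong_induction_on with
  | _ n ih =>
    rw [det_rec a n ha, trudG_rec a n]
    refine Finset.sum_congr rfl fun m hm => ?_
    rw [Finset.mem_range] at hm
    congr 1
    rcases Nat.eq_zero_or_pos m with h0 | h0
    · subst h0; simp
    · obtain ⟨m', rfl⟩ : ∃ m', m = m' + 1 := ⟨m - 1, by omega⟩
      rw [if_neg (by omega)]
      exact ih m' (by omega) (fun i j h1 h2 h3 h4 h5 => ha i j h1 (by omega) h3 (by omega) h5)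

/-- **Generalized Trudi formula.**  Let `A = [a_{i,j}]` (entries given by a
`1`-indexed function `a`) be an `n × n` complex lower Hessenberg matrix,
i.e. `a_{i,j} = 0` whenever `j > i + 1`.  Then
`det A = ∑_{l=1}^n (-1)^{n-l} ∑_{{s₁<…<s_l}⊆[n], s_l = n}
  (∏_{q=1}^l a_{s_q, s_{q-1}+1}) · ∏_{k ∈ [n]∖{s₁,…,s_l}} a_{k,k+1}`,
with the convention `s₀ = 0`.  The inner sum runs over the subsets
`S ⊆ {1,…,n}` with `n ∈ S` and `#S = l`, listed increasingly. -/
theorem generalized_trudi_formula (n : ℕ) (hn : 0 < n) (a : ℕ → ℕ → ℂ)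
    (ha : ∀ i j : ℕ, 1 ≤ i → i ≤ n → 1 ≤ j → j ≤ n → i + 1 < j → a i j = 0) :
    (Matrix.of fun i j : Fin n => a ((i : ℕ) + 1) ((j : ℕ) + 1)).det =
      ∑ l ∈ Finset.Icc 1 n, (-1 : ℂ) ^ (n - l) *
        ∑ S ∈ (Finset.Icc 1 n).powerset.filter (fun S => n ∈ S ∧ S.card = l),
          ((∏ q ∈ Finset.range l,
              a ((S.sort (· ≤ ·)).getD q 0)
                ((if q = 0 then 0 else (S.sort (· ≤ ·)).getD (q - 1) 0) + 1)) *
            ∏ k ∈ Finset.Icc 1 n \ S, a k (k + 1)) := by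
  obtain ⟨n', rfl⟩ : ∃ n', n = n' + 1 := ⟨n - 1, by omega⟩
  rw [det_eq_trudG a n' ha]
  -- turn the RHS double sum into `trudG`
  rw [trudG]
  have hmaps : ∀ S ∈ (Finset.Icc 1 (n'+1)).powerset.filter (fun S => n'+1 ∈ S),
      S.card ∈ Finset.Icc 1 (n' + 1) := by
    intro S hS
    rw [Finset.mem_filter, Finset.mem_powerset] at hS
    rw [Finset.mem_Icc]
    constructor
    · exact Finset.card_pos.mpr ⟨n' + 1, hS.2⟩
    · calc S.card ≤ (Finset.Icc 1 (n'+1)).card := Finset.card_le_card hS.1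
        _ = n' + 1 := by rw [Nat.card_Icc]; omega
  rw [← Finset.sum_fiberwise_of_maps_to hmaps]
  · refine Finset.sum_congr rfl fun l hl => ?_
    rw [Finset.mul_sum]
    rw [show ((Finset.Icc 1 (n'+1)).powerset.filter (fun S => n'+1 ∈ S)).filter
          (fun S => S.card = l)
        = (Finset.Icc 1 (n'+1)).powerset.filter (fun S => n'+1 ∈ S ∧ S.card = l) by
      rw [Finset.filter_filter]]
    refine Finset.sum_congr rfl fun S hS => ?_
    rw [Finset.mem_filter] at hS
    rw [trudT, trudP, hS.2.2]
end

section
/- Let A = [a_{i,j}] be an n×n complex Hessenberg matrix with constant superdiagonal a_{k,k+1} = a for all k ∈ [n-1], and a_{i,j} = 0 for j > i+1. Then det(A) = Σ_{l=1}^{n} (-a)^{n-l} Σ_{{s₁<...<s_l} ⊆ [n], s_l = n} Π_{q=1}^{l} a_{s_q, s_{q-1}+1}, where s₀ := 0. -/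
open Finset

lemma sort_eq_append_max (S : Finset ℕ) (M : ℕ) (hM : M ∈ S) (hmax : ∀ x ∈ S, x ≤ M) :
    S.sort (· ≤ ·) = (S.erase M).sort (· ≤ ·) ++ [M] := by
  refine List.Perm.eq_of_pairwise' (S.pairwise_sort _) ?_ ?_
  · refine (List.pairwise_append).2 ⟨(S.erase M).pairwise_sort _, List.pairwise_singleton _ M, ?_⟩
    intro x hx y hy
    simp only [List.mem_singleton] at hy
    subst hy
    exact hmax x (Finset.mem_of_mem_erase ((Finset.mem_sort _).1 hx))
  · have h1 : (S.sort (· ≤ ·)).Perm S.toList := Finset.sort_perm_toList _ _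
    have h2 : S.toList.Perm (M :: (S.erase M).toList) := by
      conv_lhs => rw [← Finset.insert_erase hM]
      exact Finset.toList_insert (Finset.notMem_erase M S)
    have h3 : (M :: (S.erase M).toList).Perm (M :: (S.erase M).sort (· ≤ ·)) :=
      List.Perm.cons _ (Finset.sort_perm_toList _ _).symm
    have h4 : ((S.erase M).sort (· ≤ ·) ++ [M]).Perm (M :: (S.erase M).sort (· ≤ ·)) :=
      List.perm_append_singleton _ _
    exact ((h1.trans h2).trans h3).trans h4.symm

lemma getD_sort_max (S : Finset ℕ) (M : ℕ) (hM : M ∈ S) (hmax : ∀ x ∈ S, x ≤ M) :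
    (S.sort (· ≤ ·)).getD (S.card - 1) 0 = M := by
  rw [sort_eq_append_max S M hM hmax]
  have hlen : ((S.erase M).sort (· ≤ ·)).length = S.card - 1 := by
    rw [Finset.length_sort, Finset.card_erase_of_mem hM]
  rw [← hlen, List.getD_append_right _ _ _ _ le_rfl]
  simp

noncomputable def hessP (a : ℕ → ℕ → ℂ) (r : ℕ → ℂ) (l : ℕ) (S : Finset ℕ) : ℂ :=
  ∏ q ∈ Finset.range l,
    (if q = l - 1 then r else a ((S.sort (· ≤ ·)).getD q 0))
      ((if q = 0 then 0 else (S.sort (· ≤ ·)).getD (q - 1) 0) + 1)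

noncomputable def hessS (a : ℕ → ℕ → ℂ) (c : ℂ) (m : ℕ) (r : ℕ → ℂ) : ℂ :=
  ∑ l ∈ Finset.Icc 1 m, (-c) ^ (m - l) *
    ∑ S ∈ (Finset.Icc 1 m).powerset.filter (fun S => m ∈ S ∧ S.card = l), hessP a r l S

lemma hessP_erase (a : ℕ → ℕ → ℂ) (r : ℕ → ℂ) (m l' : ℕ) (S : Finset ℕ) (hl : 1 ≤ l')
    (hsub : S ⊆ Finset.Icc 1 (m+2)) (hm2 : m+2 ∈ S) (hm1 : m+1 ∈ S) (hcard : S.card = l'+1) :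
    hessP a r (l'+1) S = r (m+2) * hessP a (a (m+1)) l' (S.erase (m+2)) := by
  set E := S.erase (m+2) with hE
  have hm2max : ∀ x ∈ S, x ≤ m+2 := fun x hx => (Finset.mem_Icc.1 (hsub hx)).2
  have hsortS : S.sort (· ≤ ·) = E.sort (· ≤ ·) ++ [m+2] := sort_eq_append_max S (m+2) hm2 hm2max
  have hcardE : E.card = l' := by rw [hE, Finset.card_erase_of_mem hm2, hcard]; omega
  have hlenE : (E.sort (· ≤ ·)).length = l' := by rw [Finset.length_sort, hcardE]
  have hm1E : m+1 ∈ E := Finset.mem_erase.2 ⟨by omega, hm1⟩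
  have hmaxE : ∀ x ∈ E, x ≤ m+1 := by
    intro x hx
    have h1 := hm2max x (Finset.mem_of_mem_erase hx)
    have h2 := (Finset.mem_erase.1 hx).1
    omega
  have hgetE : (E.sort (· ≤ ·)).getD (l'-1) 0 = m+1 := by
    have := getD_sort_max E (m+1) hm1E hmaxE
    rwa [hcardE] at this
  unfold hessP
  rw [Finset.prod_range_succ]
  have hfac : (if l' = l'+1-1 then r else a ((S.sort (· ≤ ·)).getD l' 0))
      ((if l' = 0 then 0 else (S.sort (· ≤ ·)).getD (l'-1) 0) + 1) = r (m+2) := by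
    rw [if_pos (by omega), if_neg (by omega), hsortS,
      List.getD_append _ _ _ _ (by rw [hlenE]; omega), hgetE]
  rw [hfac, mul_comm]
  congr 1
  apply Finset.prod_congr rfl
  intro q hq
  have hql : q < l' := Finset.mem_range.1 hq
  have hgq : (S.sort (· ≤ ·)).getD q 0 = (E.sort (· ≤ ·)).getD q 0 := by
    rw [hsortS]; exact List.getD_append _ _ _ _ (by rw [hlenE]; omega)
  have harg : (if q = 0 then 0 else (S.sort (· ≤ ·)).getD (q-1) 0) =
      (if q = 0 then 0 else (E.sort (· ≤ ·)).getD (q-1) 0) := by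
    by_cases h0 : q = 0
    · simp [h0]
    · rw [if_neg h0, if_neg h0, hsortS, List.getD_append _ _ _ _ (by rw [hlenE]; omega)]
  rw [if_neg (by omega), harg, hgq]
  by_cases hq1 : q = l'-1
  · rw [if_pos hq1, hq1, hgetE]
  · rw [if_neg hq1]

lemma hessP_swap (a : ℕ → ℕ → ℂ) (r : ℕ → ℂ) (m l : ℕ) (S : Finset ℕ)
    (hsub : S ⊆ Finset.Icc 1 (m+2)) (hm2 : m+2 ∈ S) (hm1 : m+1 ∉ S) (hcard : S.card = l) :
    hessP a r l S = hessP a r l (insert (m+1) (S.erase (m+2))) := by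
  set E := S.erase (m+2) with hE
  set T := insert (m+1) E with hT
  have hm2max : ∀ x ∈ S, x ≤ m+2 := fun x hx => (Finset.mem_Icc.1 (hsub hx)).2
  have hsortS : S.sort (· ≤ ·) = E.sort (· ≤ ·) ++ [m+2] := sort_eq_append_max S (m+2) hm2 hm2max
  have hl : 1 ≤ l := by
    rw [← hcard]; exact Finset.card_pos.2 ⟨m+2, hm2⟩
  have hcardE : E.card = l - 1 := by rw [hE, Finset.card_erase_of_mem hm2, hcard]
  have hlenE : (E.sort (· ≤ ·)).length = l - 1 := by rw [Finset.length_sort, hcardE]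
  have hm1E : m + 1 ∉ E := fun h => hm1 (Finset.mem_of_mem_erase h)
  have hTe : T.erase (m+1) = E := by rw [hT, Finset.erase_insert hm1E]
  have hmaxT : ∀ x ∈ T, x ≤ m+1 := by
    intro x hx
    rcases Finset.mem_insert.1 hx with h | h
    · omega
    · have h1 := hm2max x (Finset.mem_of_mem_erase h)
      have h2 := (Finset.mem_erase.1 h).1
      omega
  have hsortT : T.sort (· ≤ ·) = E.sort (· ≤ ·) ++ [m+1] := by
    have := sort_eq_append_max T (m+1) (Finset.mem_insert_self _ _) hmaxT
    rwa [hTe] at this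
  unfold hessP
  apply Finset.prod_congr rfl
  intro q hq
  have hql : q < l := Finset.mem_range.1 hq
  have hargS : (if q = 0 then 0 else (S.sort (· ≤ ·)).getD (q-1) 0) =
      (if q = 0 then 0 else (E.sort (· ≤ ·)).getD (q-1) 0) := by
    by_cases h0 : q = 0
    · simp [h0]
    · rw [if_neg h0, if_neg h0, hsortS, List.getD_append _ _ _ _ (by rw [hlenE]; omega)]
  have hargT : (if q = 0 then 0 else (T.sort (· ≤ ·)).getD (q-1) 0) =
      (if q = 0 then 0 else (E.sort (· ≤ ·)).getD (q-1) 0) := by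
    by_cases h0 : q = 0
    · simp [h0]
    · rw [if_neg h0, if_neg h0, hsortT, List.getD_append _ _ _ _ (by rw [hlenE]; omega)]
  by_cases hq1 : q = l-1
  · rw [if_pos hq1, if_pos hq1, hargS, hargT]
  · have hgS : (S.sort (· ≤ ·)).getD q 0 = (E.sort (· ≤ ·)).getD q 0 := by
      rw [hsortS]; exact List.getD_append _ _ _ _ (by rw [hlenE]; omega)
    have hgT : (T.sort (· ≤ ·)).getD q 0 = (E.sort (· ≤ ·)).getD q 0 := by
      rw [hsortT]; exact List.getD_append _ _ _ _ (by rw [hlenE]; omega)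
    rw [if_neg hq1, if_neg hq1, hargS, hargT, hgS, hgT]

lemma hessS_one (a : ℕ → ℕ → ℂ) (c : ℂ) (r : ℕ → ℂ) : hessS a c 1 r = r 1 := by
  unfold hessS
  rw [Finset.Icc_self, Finset.sum_singleton]
  have hf : ({1} : Finset ℕ).powerset.filter (fun S => 1 ∈ S ∧ S.card = 1) = {{1}} := by
    ext S
    simp only [Finset.mem_filter, Finset.mem_powerset, Finset.subset_singleton_iff,
      Finset.mem_singleton]
    constructor
    · rintro ⟨rfl | rfl, h1, hc⟩
      · exact absurd h1 (Finset.notMem_empty 1)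
      · rfl
    · rintro rfl
      simp
  rw [hf, Finset.sum_singleton]
  unfold hessP
  simp

lemma hessS_succ (a : ℕ → ℕ → ℂ) (c : ℂ) (m : ℕ) (r : ℕ → ℂ) :
    hessS a c (m+2) r = r (m+2) * hessS a c (m+1) (a (m+1)) - c * hessS a c (m+1) r := by
  have hsplit : hessS a c (m+2) r
      = (∑ l ∈ Finset.Icc 1 (m+2), (-c)^(m+2-l) *
          ∑ S ∈ (Finset.Icc 1 (m+2)).powerset.filter
            (fun S => (m+2 ∈ S ∧ S.card = l) ∧ m+1 ∈ S), hessP a r l S)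
      + ∑ l ∈ Finset.Icc 1 (m+2), (-c)^(m+2-l) *
          ∑ S ∈ (Finset.Icc 1 (m+2)).powerset.filter
            (fun S => (m+2 ∈ S ∧ S.card = l) ∧ ¬ m+1 ∈ S), hessP a r l S := by
    unfold hessS
    rw [← Finset.sum_add_distrib]
    apply Finset.sum_congr rfl
    intro l _
    rw [← mul_add]
    congr 1
    have h := Finset.sum_filter_add_sum_filter_not
      ((Finset.Icc 1 (m+2)).powerset.filter (fun S => m+2 ∈ S ∧ S.card = l))
      (fun S => m+1 ∈ S) (hessP a r l)
    rw [Finset.filter_filter, Finset.filter_filter] at h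
    exact h.symm
  have hX : (∑ l ∈ Finset.Icc 1 (m+2), (-c)^(m+2-l) *
          ∑ S ∈ (Finset.Icc 1 (m+2)).powerset.filter
            (fun S => (m+2 ∈ S ∧ S.card = l) ∧ m+1 ∈ S), hessP a r l S)
      = r (m+2) * hessS a c (m+1) (a (m+1)) := by
    have h12 : Finset.Icc 1 (m+2) = insert 1 (Finset.Icc 2 (m+2)) := by
      ext x; simp only [Finset.mem_Icc, Finset.mem_insert]; omega
    have hstep : ∀ f : ℕ → ℂ, (∑ l ∈ Finset.Icc 1 (m+2), f l)
        = f 1 + ∑ l ∈ Finset.Icc 2 (m+2), f l := by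
      intro f
      rw [h12, Finset.sum_insert (by simp)]
    rw [hstep]
    have hempty : (Finset.Icc 1 (m+2)).powerset.filter
        (fun S => (m+2 ∈ S ∧ S.card = 1) ∧ m+1 ∈ S) = ∅ := by
      apply Finset.filter_false_of_mem
      intro S _
      rintro ⟨⟨h2, hc⟩, h1⟩
      have hsub : ({m+1, m+2} : Finset ℕ) ⊆ S := by
        intro x hx
        simp only [Finset.mem_insert, Finset.mem_singleton] at hx
        rcases hx with rfl | rfl <;> assumption
      have hle := Finset.card_le_card hsub
      rw [Finset.card_insert_of_notMem (by simp), Finset.card_singleton] at hle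
      omega
    rw [hempty, Finset.sum_empty, mul_zero, zero_add]
    unfold hessS
    rw [Finset.mul_sum]
    symm
    refine Finset.sum_nbij' (fun l' => l' + 1) (fun l => l - 1) ?_ ?_ ?_ ?_ ?_
    · intro l' hl'; simp only [Finset.mem_Icc] at *; omega
    · intro l hl; simp only [Finset.mem_Icc] at *; omega
    · intro l' _; beta_reduce; omega
    · intro l hl; simp only [Finset.mem_Icc] at hl; beta_reduce; omega
    · intro l' hl'
      beta_reduce
      simp only [Finset.mem_Icc] at hl'
      rw [show m+2-(l'+1) = m+1-l' from by omega, ← mul_assoc,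
        mul_comm (r (m+2)) ((-c)^(m+1-l')), mul_assoc]
      congr 1
      rw [Finset.mul_sum]
      refine Finset.sum_nbij' (fun T => insert (m+2) T) (fun S => S.erase (m+2)) ?_ ?_ ?_ ?_ ?_
      · intro T hT
        simp only [Finset.mem_filter, Finset.mem_powerset] at hT ⊢
        obtain ⟨hTsub, hTm1, hTc⟩ := hT
        have hm2T : m+2 ∉ T := fun h => by
          have := Finset.mem_Icc.1 (hTsub h); omega
        refine ⟨?_, ⟨Finset.mem_insert_self _ _, ?_⟩, Finset.mem_insert_of_mem hTm1⟩
        · intro x hx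
          rcases Finset.mem_insert.1 hx with rfl | h
          · simp only [Finset.mem_Icc]; omega
          · have := Finset.mem_Icc.1 (hTsub h)
            simp only [Finset.mem_Icc]; omega
        · rw [Finset.card_insert_of_notMem hm2T, hTc]
      · intro S hS
        simp only [Finset.mem_filter, Finset.mem_powerset] at hS ⊢
        obtain ⟨hSsub, ⟨hm2S, hcS⟩, hm1S⟩ := hS
        refine ⟨?_, Finset.mem_erase.2 ⟨by omega, hm1S⟩, ?_⟩
        · intro x hx
          have hx1 := Finset.mem_Icc.1 (hSsub (Finset.mem_of_mem_erase hx))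
          have hx2 := (Finset.mem_erase.1 hx).1
          simp only [Finset.mem_Icc]; omega
        · rw [Finset.card_erase_of_mem hm2S, hcS]; omega
      · intro T hT
        simp only [Finset.mem_filter, Finset.mem_powerset] at hT
        have hm2T : m+2 ∉ T := fun h => by
          have := Finset.mem_Icc.1 (hT.1 h); omega
        exact Finset.erase_insert hm2T
      · intro S hS
        simp only [Finset.mem_filter, Finset.mem_powerset] at hS
        exact Finset.insert_erase hS.2.1.1
      · intro T hT
        simp only [Finset.mem_filter, Finset.mem_powerset] at hT
        obtain ⟨hTsub, hTm1, hTc⟩ := hT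
        have hm2T : m+2 ∉ T := fun h => by
          have := Finset.mem_Icc.1 (hTsub h); omega
        have := hessP_erase a r m l' (insert (m+2) T) (by omega)
          (by
            intro x hx
            rcases Finset.mem_insert.1 hx with rfl | h
            · simp only [Finset.mem_Icc]; omega
            · have := Finset.mem_Icc.1 (hTsub h)
              simp only [Finset.mem_Icc]; omega)
          (Finset.mem_insert_self _ _) (Finset.mem_insert_of_mem hTm1)
          (by rw [Finset.card_insert_of_notMem hm2T, hTc])
        rw [this, Finset.erase_insert hm2T]
  have hY : (∑ l ∈ Finset.Icc 1 (m+2), (-c)^(m+2-l) *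
          ∑ S ∈ (Finset.Icc 1 (m+2)).powerset.filter
            (fun S => (m+2 ∈ S ∧ S.card = l) ∧ ¬ m+1 ∈ S), hessP a r l S)
      = -(c * hessS a c (m+1) r) := by
    have h2 : Finset.Icc 1 (m+2) = insert (m+2) (Finset.Icc 1 (m+1)) := by
      ext x; simp only [Finset.mem_Icc, Finset.mem_insert]; omega
    have hstep : ∀ f : ℕ → ℂ, (∑ l ∈ Finset.Icc 1 (m+2), f l)
        = f (m+2) + ∑ l ∈ Finset.Icc 1 (m+1), f l := by
      intro f
      rw [h2, Finset.sum_insert (by simp)]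
    rw [hstep]
    have hempty : (Finset.Icc 1 (m+2)).powerset.filter
        (fun S => (m+2 ∈ S ∧ S.card = m+2) ∧ ¬ m+1 ∈ S) = ∅ := by
      apply Finset.filter_false_of_mem
      intro S hS
      rintro ⟨⟨h2', hc⟩, h1⟩
      have hsub := Finset.mem_powerset.1 hS
      have hSeq : S = Finset.Icc 1 (m+2) := by
        apply Finset.eq_of_subset_of_card_le hsub
        rw [Nat.card_Icc, hc]
        omega
      apply h1
      rw [hSeq]
      simp only [Finset.mem_Icc]; omega
    rw [hempty, Finset.sum_empty, mul_zero, zero_add]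
    unfold hessS
    rw [Finset.mul_sum, ← Finset.sum_neg_distrib]
    apply Finset.sum_congr rfl
    intro l hl
    simp only [Finset.mem_Icc] at hl
    have hw : ((-c):ℂ)^(m+2-l) = (-c)^(m+1-l) * (-c) := by
      rw [← pow_succ, show m+1-l+1 = m+2-l from by omega]
    have hinner : (∑ S ∈ (Finset.Icc 1 (m+2)).powerset.filter
            (fun S => (m+2 ∈ S ∧ S.card = l) ∧ ¬ m+1 ∈ S), hessP a r l S)
        = ∑ T ∈ (Finset.Icc 1 (m+1)).powerset.filter
            (fun T => m+1 ∈ T ∧ T.card = l), hessP a r l T := by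
      refine Finset.sum_nbij' (fun S => insert (m+1) (S.erase (m+2)))
        (fun T => insert (m+2) (T.erase (m+1))) ?_ ?_ ?_ ?_ ?_
      · intro S hS
        simp only [Finset.mem_filter, Finset.mem_powerset] at hS ⊢
        obtain ⟨hSsub, ⟨hm2S, hcS⟩, hm1S⟩ := hS
        have hm1E : m+1 ∉ S.erase (m+2) := fun h => hm1S (Finset.mem_of_mem_erase h)
        refine ⟨?_, Finset.mem_insert_self _ _, ?_⟩
        · intro x hx
          rcases Finset.mem_insert.1 hx with rfl | h
          · simp only [Finset.mem_Icc]; omega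
          · have hx1 := Finset.mem_Icc.1 (hSsub (Finset.mem_of_mem_erase h))
            have hx2 := (Finset.mem_erase.1 h).1
            simp only [Finset.mem_Icc]; omega
        · rw [Finset.card_insert_of_notMem hm1E, Finset.card_erase_of_mem hm2S, hcS]
          have : 1 ≤ l := by
            rw [← hcS]; exact Finset.card_pos.2 ⟨m+2, hm2S⟩
          omega
      · intro T hT
        simp only [Finset.mem_filter, Finset.mem_powerset] at hT ⊢
        obtain ⟨hTsub, hTm1, hTc⟩ := hT
        have hm2E : m+2 ∉ T.erase (m+1) := fun h => by
          have := Finset.mem_Icc.1 (hTsub (Finset.mem_of_mem_erase h)); omega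
        refine ⟨?_, ⟨Finset.mem_insert_self _ _, ?_⟩, ?_⟩
        · intro x hx
          rcases Finset.mem_insert.1 hx with rfl | h
          · simp only [Finset.mem_Icc]; omega
          · have := Finset.mem_Icc.1 (hTsub (Finset.mem_of_mem_erase h))
            simp only [Finset.mem_Icc]; omega
        · rw [Finset.card_insert_of_notMem hm2E, Finset.card_erase_of_mem hTm1, hTc]
          have : 1 ≤ l := by
            rw [← hTc]; exact Finset.card_pos.2 ⟨m+1, hTm1⟩
          omega
        · intro h
          rcases Finset.mem_insert.1 h with h' | h'
          · omega
          · exact (Finset.mem_erase.1 h').1 rfl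
      · intro S hS
        simp only [Finset.mem_filter, Finset.mem_powerset] at hS
        obtain ⟨hSsub, ⟨hm2S, hcS⟩, hm1S⟩ := hS
        have hm1E : m+1 ∉ S.erase (m+2) := fun h => hm1S (Finset.mem_of_mem_erase h)
        beta_reduce
        rw [Finset.erase_insert hm1E, Finset.insert_erase hm2S]
      · intro T hT
        simp only [Finset.mem_filter, Finset.mem_powerset] at hT
        obtain ⟨hTsub, hTm1, hTc⟩ := hT
        have hm2E : m+2 ∉ T.erase (m+1) := fun h => by
          have := Finset.mem_Icc.1 (hTsub (Finset.mem_of_mem_erase h)); omega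
        beta_reduce
        rw [Finset.erase_insert hm2E, Finset.insert_erase hTm1]
      · intro S hS
        simp only [Finset.mem_filter, Finset.mem_powerset] at hS
        obtain ⟨hSsub, ⟨hm2S, hcS⟩, hm1S⟩ := hS
        exact hessP_swap a r m l S hSsub hm2S hm1S hcS
    rw [hinner, hw]
    ring
  rw [hsplit, hX, hY]
  ring

noncomputable def hessF (a : ℕ → ℕ → ℂ) (c : ℂ) : ℕ → (ℕ → ℂ) → ℂ
  | 0, _ => 1
  | 1, r => r 1
  | (m+2), r => r (m+2) * hessF a c (m+1) (a (m+1)) - c * hessF a c (m+1) r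

def hessM (a : ℕ → ℕ → ℂ) (m : ℕ) (r : ℕ → ℂ) : Matrix (Fin m) (Fin m) ℂ :=
  Matrix.of fun i j => if (i : ℕ) = m - 1 then r ((j : ℕ) + 1) else a ((i : ℕ) + 1) ((j : ℕ) + 1)

lemma hessM_det (n : ℕ) (a : ℕ → ℕ → ℂ) (c : ℂ)
    (ha : ∀ i j : ℕ, 1 ≤ i → i ≤ n → 1 ≤ j → j ≤ n → i + 1 < j → a i j = 0)
    (hsup : ∀ k : ℕ, 1 ≤ k → k ≤ n - 1 → a k (k + 1) = c) :
    ∀ m, 1 ≤ m → m ≤ n → ∀ r, (hessM a m r).det = hessF a c m r := by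
  intro m
  induction m using Nat.strong_induction_on with
  | _ m IH =>
    match m with
    | 0 => intro h; exact absurd h (by omega)
    | 1 =>
      intro _ _ r
      rw [Matrix.det_fin_one]
      simp [hessM, hessF]
    | (m+2) =>
      intro _ hmn r
      rw [show ((m+2:ℕ)) = (m+1).succ from rfl, Matrix.det_succ_column _ (Fin.last (m+1)),
        Fin.sum_univ_castSucc, Fin.sum_univ_castSucc]
      have hz : ∀ i : Fin m,
          (-1 : ℂ) ^ (((i.castSucc.castSucc : Fin (m+2)) : ℕ) + ((Fin.last (m+1) : Fin (m+2)) : ℕ))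
            * hessM a (m+2) r i.castSucc.castSucc (Fin.last (m+1))
            * ((hessM a (m+2) r).submatrix i.castSucc.castSucc.succAbove
                (Fin.last (m+1)).succAbove).det = 0 := by
        intro i
        have hi : (i : ℕ) < m := i.isLt
        have : hessM a (m+2) r i.castSucc.castSucc (Fin.last (m+1)) = 0 := by
          simp only [hessM, Matrix.of_apply, Fin.coe_castSucc, Fin.val_last]
          rw [if_neg (by omega)]
          exact ha _ _ (by omega) (by omega) (by omega) (by omega) (by omega)
        rw [this]; ring
      rw [Finset.sum_congr rfl (fun i _ => hz i), Finset.sum_const_zero, zero_add]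
      -- the two remaining terms
      have hA : hessM a (m+2) r (Fin.last m).castSucc (Fin.last (m+1)) = c := by
        simp only [hessM, Matrix.of_apply, Fin.coe_castSucc, Fin.val_last]
        rw [if_neg (by omega)]
        exact hsup (m+1) (by omega) (by omega)
      have hB : hessM a (m+2) r (Fin.last (m+1)) (Fin.last (m+1)) = r (m+2) := by
        simp only [hessM, Matrix.of_apply, Fin.val_last]
        rw [if_pos (by omega)]
      have hm1 : ((hessM a (m+2) r).submatrix (Fin.last m).castSucc.succAbove
          (Fin.last (m+1)).succAbove) = hessM a (m+1) r := by
        ext i j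
        have hj : ((Fin.last (m+1)).succAbove j : ℕ) = (j : ℕ) := by
          simp [Fin.succAbove_last]
        by_cases hi : (i : ℕ) = m
        · have : ((Fin.last m).castSucc.succAbove i : ℕ) = m + 1 := by
            rw [Fin.succAbove]
            rw [if_neg (by simp [Fin.lt_def, hi])]
            simp [hi]
          simp only [Matrix.submatrix_apply, hessM, Matrix.of_apply, this, hj]
          rw [if_pos (by omega), if_pos (by omega)]
        · have hilt : (i : ℕ) < m := by omega
          have : ((Fin.last m).castSucc.succAbove i : ℕ) = (i : ℕ) := by
            rw [Fin.succAbove]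
            rw [if_pos (by simp [Fin.lt_def]; omega)]
            simp
          simp only [Matrix.submatrix_apply, hessM, Matrix.of_apply, this, hj]
          rw [if_neg (by omega), if_neg (by omega)]
      have hm2 : ((hessM a (m+2) r).submatrix (Fin.last (m+1)).succAbove
          (Fin.last (m+1)).succAbove) = hessM a (m+1) (a (m+1)) := by
        ext i j
        have hj : ((Fin.last (m+1)).succAbove j : ℕ) = (j : ℕ) := by simp [Fin.succAbove_last]
        have hi' : ((Fin.last (m+1)).succAbove i : ℕ) = (i : ℕ) := by simp [Fin.succAbove_last]
        simp only [Matrix.submatrix_apply, hessM, Matrix.of_apply, hi', hj]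
        by_cases hi : (i : ℕ) = m
        · rw [if_neg (by omega), if_pos (by omega), hi]
        · rw [if_neg (by omega), if_neg (by omega)]
      rw [hA, hB, hm1, hm2, IH (m+1) (by omega) (by omega) (by omega) r,
        IH (m+1) (by omega) (by omega) (by omega) (a (m+1))]
      simp only [Fin.coe_castSucc, Fin.val_last, hessF]
      have h1 : ((-1:ℂ))^((m:ℕ) + (m+1)) = -1 := by
        rw [show (m:ℕ)+(m+1) = 2*m+1 from by ring, pow_succ, pow_mul]; simp
      have h2 : ((-1:ℂ))^((m:ℕ)+1+(m+1)) = 1 := by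
        rw [show (m:ℕ)+1+(m+1) = 2*(m+1) from by ring, pow_mul]; simp
      rw [h1, h2]
      ring

lemma hessS_eq_hessF (a : ℕ → ℕ → ℂ) (c : ℂ) :
    ∀ m, 1 ≤ m → ∀ r : ℕ → ℂ, hessS a c m r = hessF a c m r := by
  intro m
  induction m using Nat.strong_induction_on with
  | _ m IH =>
    match m with
    | 0 => intro h; exact absurd h (by omega)
    | 1 =>
      intro _ r
      rw [hessS_one]
      simp [hessF]
    | (m+2) =>
      intro _ r
      rw [hessS_succ, IH (m+1) (by omega) (by omega) (a (m+1)), IH (m+1) (by omega) (by omega) r]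
      simp [hessF]

/-- **Trudi-type formula for Hessenberg matrices with constant
superdiagonal.**  Let `A = [a_{i,j}]` (entries given by a `1`-indexed
function `a`) be an `n × n` complex lower Hessenberg matrix
(`a_{i,j} = 0` for `j > i+1`) whose superdiagonal entries are all equal
to `c`, i.e. `a_{k,k+1} = c` for `k ∈ [n-1]`.  Then
`det A = ∑_{l=1}^n (-c)^{n-l} ∑_{{s₁<…<s_l}⊆[n], s_l=n}
  ∏_{q=1}^l a_{s_q, s_{q-1}+1}`, with `s₀ := 0`. -/
theorem trudi_formula_constant_superdiagonal (n : ℕ) (hn : 0 < n)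
    (a : ℕ → ℕ → ℂ) (c : ℂ)
    (ha : ∀ i j : ℕ, 1 ≤ i → i ≤ n → 1 ≤ j → j ≤ n → i + 1 < j → a i j = 0)
    (hsup : ∀ k : ℕ, 1 ≤ k → k ≤ n - 1 → a k (k + 1) = c) :
    (Matrix.of fun i j : Fin n => a ((i : ℕ) + 1) ((j : ℕ) + 1)).det =
      ∑ l ∈ Finset.Icc 1 n, (-c) ^ (n - l) *
        ∑ S ∈ (Finset.Icc 1 n).powerset.filter (fun S => n ∈ S ∧ S.card = l),
          ∏ q ∈ Finset.range l,
            a ((S.sort (· ≤ ·)).getD q 0)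
              ((if q = 0 then 0 else (S.sort (· ≤ ·)).getD (q - 1) 0) + 1) := by
  have h1 : (Matrix.of fun i j : Fin n => a ((i : ℕ) + 1) ((j : ℕ) + 1)) = hessM a n (a n) := by
    ext i j
    simp only [hessM, Matrix.of_apply]
    by_cases h : (i : ℕ) = n - 1
    · rw [if_pos h]
      congr 1
      have := i.isLt
      omega
    · rw [if_neg h]
  rw [h1, hessM_det n a c ha hsup n hn le_rfl (a n), ← hessS_eq_hessF a c n hn (a n)]
  unfold hessS
  apply Finset.sum_congr rfl
  intro l _
  congr 1
  apply Finset.sum_congr rfl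
  intro S hS
  simp only [Finset.mem_filter, Finset.mem_powerset] at hS
  obtain ⟨hsub, hnS, hcard⟩ := hS
  have hmax : ∀ x ∈ S, x ≤ n := fun x hx => (Finset.mem_Icc.1 (hsub hx)).2
  have hget : (S.sort (· ≤ ·)).getD (l - 1) 0 = n := by
    have := getD_sort_max S n hnS hmax
    rwa [hcard] at this
  unfold hessP
  apply Finset.prod_congr rfl
  intro q hq
  by_cases hq1 : q = l - 1
  · rw [if_pos hq1, hq1, hget]
  · rw [if_neg hq1]
end

section
/- Let a ∈ ℂ, b₀ ∈ ℂ with 1+b₀ ≠ 0, and let (b_n)_{n≥1} be complex numbers. Define c₁ = a b₁ (1+b₀)^{a-1} and, recursively for n ≥ 2, c_n = (1/(n(1+b₀))) [ n a (1+b₀)^a b_n + Σ_{k=1}^{n-1} (ka-(n-k)) b_k c_{n-k} ]. Then for every n ≥ 1, c_n = a(1+b₀)^{a-1} [ b_n + Σ_{j=1}^{n-1} b_j Σ_{l=1}^{n-j} (1+b₀)^{-l} Σ_{{s₁<...<s_l}⊆[n-j], s_l=n-j} Π_{q=1}^{l} ((a(s_q - s_{q-1}) - s_{q-1} - j)/(s_q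 + j)) b_{s_q - s_{q-1}} ], where s₀ := 0. -/
open Finset
open Finset

noncomputable def gterm (a : ℂ) (b : ℕ → ℂ) (j : ℕ) (sq sp : ℕ) : ℂ :=
  (a * ((sq : ℂ) - (sp : ℂ)) - (sp : ℂ) - (j : ℂ)) / ((sq : ℂ) + (j : ℂ)) * b (sq - sp)

noncomputable def chainProd (a : ℂ) (b : ℕ → ℂ) (j : ℕ) : List ℕ → ℕ → ℂ
  | [], _ => 1
  | x :: xs, p => gterm a b j x p * chainProd a b j xs x

lemma chainProd_eq (a : ℂ) (b : ℕ → ℂ) (j : ℕ) (L : List ℕ) (p : ℕ) :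
    chainProd a b j L p =
      ∏ q ∈ Finset.range L.length,
        gterm a b j (L.getD q 0) (if q = 0 then p else L.getD (q - 1) 0) := by
  induction L generalizing p with
  | nil => simp [chainProd]
  | cons x xs ih =>
    rw [chainProd, ih]
    rw [List.length_cons, Finset.prod_range_succ']
    simp only [List.getD_cons_succ, Nat.add_sub_cancel, if_neg (Nat.succ_ne_zero _),
      List.getD_cons_zero, if_pos rfl, mul_comm]
    congr 1
    apply Finset.prod_congr rfl
    intro q _
    congr 1
    cases q with
    | zero => simp
    | succ q' => simp

lemma chainProd_append (a : ℂ) (b : ℕ → ℂ) (j : ℕ) (L : List ℕ) (m p : ℕ) :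
    chainProd a b j (L ++ [m]) p = chainProd a b j L p * gterm a b j m (L.getLastD p) := by
  induction L generalizing p with
  | nil => simp [chainProd]
  | cons x xs ih =>
    rw [List.cons_append, chainProd, ih, chainProd, List.getLastD_cons]
    ring

lemma sort_insert_max_s9 (S : Finset ℕ) (m : ℕ) (h : ∀ x ∈ S, x < m) :
    (insert m S).sort (· ≤ ·) = S.sort (· ≤ ·) ++ [m] := by
  have hm : m ∉ S := fun hx => lt_irrefl m (h m hx)
  refine (fun hp hs => List.Perm.eq_of_pairwise' (Finset.pairwise_sort _ _) hs hp) ?_ ?_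
  · refine List.Perm.trans ?_ (List.perm_append_singleton m _).symm
    rw [← Multiset.coe_eq_coe]
    change ((insert m S).sort (· ≤ ·) : Multiset ℕ) = (m ::ₘ (S.sort (· ≤ ·) : Multiset ℕ))
    rw [Finset.sort_eq, Finset.sort_eq, Finset.insert_val, Multiset.ndinsert_of_notMem hm]
  · rw [List.pairwise_append]
    refine ⟨Finset.pairwise_sort _ _, List.pairwise_singleton _ m, ?_⟩
    intro x hx y hy
    simp only [List.mem_singleton] at hy
    subst hy
    exact le_of_lt (h x ((Finset.mem_sort _).1 hx))

lemma sort_getLastD_max' (S : Finset ℕ) (hS : S.Nonempty) :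
    (S.sort (· ≤ ·)).getLastD 0 = S.max' hS := by
  have hne : S.sort (· ≤ ·) ≠ [] := by
    simp [← Finset.sort_eq, ← List.length_pos_iff_ne_nil, Finset.length_sort,
      Finset.card_pos.2 hS]
  rw [List.getLastD_eq_getLast? , List.getLast?_eq_getLast hne, Option.getD_some]
  rw [List.getLast_eq_getElem]
  rw [Finset.sorted_last_eq_max']

noncomputable def Tm (a b0 : ℂ) (b : ℕ → ℂ) (j m : ℕ) : ℂ :=
  ∑ S ∈ (Finset.Icc 1 m).powerset.filter (m ∈ ·),
    ((1 + b0) ^ S.card)⁻¹ * chainProd a b j (S.sort (· ≤ ·)) 0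

lemma Tm_eq (a b0 : ℂ) (b : ℕ → ℂ) (j m : ℕ) :
    Tm a b0 b j m = ∑ l ∈ Finset.Icc 1 m, ((1 + b0) ^ l)⁻¹ *
      ∑ S ∈ (Finset.Icc 1 m).powerset.filter (fun S => m ∈ S ∧ S.card = l),
        ∏ q ∈ Finset.range l,
          (fun sq sp : ℕ =>
              ((a * ((sq : ℂ) - (sp : ℂ)) - (sp : ℂ) - (j : ℂ)) /
                  ((sq : ℂ) + (j : ℂ))) * b (sq - sp))
            ((S.sort (· ≤ ·)).getD q 0)
            (if q = 0 then 0 else (S.sort (· ≤ ·)).getD (q - 1) 0) := by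
  rw [Tm]
  rw [← Finset.sum_fiberwise_of_maps_to (g := Finset.card)
      (t := Finset.Icc 1 m) ?_ (fun S => ((1 + b0) ^ S.card)⁻¹ * chainProd a b j (S.sort (· ≤ ·)) 0)]
  · apply Finset.sum_congr rfl
    intro l _
    rw [Finset.mul_sum]
    rw [Finset.sum_filter, Finset.sum_filter, Finset.sum_filter]
    apply Finset.sum_congr rfl
    intro S hS
    by_cases h1 : m ∈ S
    · by_cases h2 : S.card = l
      · simp only [h1, h2, if_pos, and_self, if_true]
        congr 1
        rw [chainProd_eq]
        have : (S.sort (· ≤ ·)).length = l := by rw [Finset.length_sort, h2]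
        rw [this]
        exact Finset.prod_congr rfl fun q _ => by simp [gterm]
      · simp [h1, h2]
    · simp [h1]
  · intro S hS
    simp only [Finset.mem_filter, Finset.mem_powerset] at hS
    simp only [Finset.mem_Icc]
    constructor
    · exact Finset.card_pos.2 ⟨m, hS.2⟩
    · calc S.card ≤ (Finset.Icc 1 m).card := Finset.card_le_card hS.1
        _ = m := by simp

lemma Tm_split (a b0 : ℂ) (b : ℕ → ℂ) (j m : ℕ) (hm : 1 ≤ m) :
    Tm a b0 b j m = (1 + b0)⁻¹ * gterm a b j m 0 +
      ∑ k ∈ Finset.Icc 1 (m - 1),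
        (1 + b0)⁻¹ * gterm a b j m (m - k) * Tm a b0 b j (m - k) := by
  rw [Tm]
  rw [← Finset.sum_filter_add_sum_filter_not _ (· = {m})]
  congr 1
  · have h1 : ((Finset.Icc 1 m).powerset.filter (m ∈ ·)).filter (· = {m}) =
        {({m} : Finset ℕ)} := by
      ext S
      simp only [Finset.mem_filter, Finset.mem_powerset, Finset.mem_singleton]
      constructor
      · rintro ⟨-, h⟩; exact h
      · rintro rfl
        refine ⟨⟨?_, Finset.mem_singleton_self m⟩, rfl⟩
        rw [Finset.singleton_subset_iff, Finset.mem_Icc]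
        exact ⟨hm, le_refl m⟩
    rw [h1, Finset.sum_singleton, Finset.card_singleton, pow_one, Finset.sort_singleton]
    rw [chainProd, chainProd, mul_one]
  · have key : ∑ S ∈ ((Finset.Icc 1 m).powerset.filter (m ∈ ·)).filter (¬ · = {m}),
        ((1 + b0) ^ S.card)⁻¹ * chainProd a b j (S.sort (· ≤ ·)) 0 =
        ∑ x ∈ (Finset.Icc 1 (m - 1)).sigma
            (fun k => (Finset.Icc 1 (m - k)).powerset.filter ((m - k) ∈ ·)),
          ((1 + b0) ^ (insert m x.2).card)⁻¹ *
            chainProd a b j ((insert m x.2).sort (· ≤ ·)) 0 := by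
      apply Finset.sum_nbij' (fun S => (⟨m - (S.erase m).sup id, S.erase m⟩ :
          Σ _ : ℕ, Finset ℕ)) (fun x => insert m x.2)
      · -- hi
        intro S hS
        simp only [Finset.mem_filter, Finset.mem_powerset] at hS
        obtain ⟨⟨hsub, hmem⟩, hne⟩ := hS
        have hne' : (S.erase m).Nonempty := by
          rw [Finset.nonempty_iff_ne_empty]
          intro h
          apply hne
          have := Finset.insert_erase hmem
          rw [h] at this
          simpa using this.symm
        set t := (S.erase m).sup id with ht
        have htmem : t ∈ S.erase m := by
          rw [ht, ← Finset.sup'_eq_sup hne' id, ← Finset.max'_eq_sup' ]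
          exact Finset.max'_mem _ _
        have htS : t ∈ S := Finset.mem_of_mem_erase htmem
        have ht1 : 1 ≤ t := (Finset.mem_Icc.1 (hsub htS)).1
        have htm : t ≤ m := (Finset.mem_Icc.1 (hsub htS)).2
        have htne : t ≠ m := Finset.ne_of_mem_erase htmem
        have htm' : t ≤ m - 1 := by omega
        simp only [Finset.mem_sigma, Finset.mem_Icc, Finset.mem_filter, Finset.mem_powerset]
        have hmk : m - (m - t) = t := by omega
        refine ⟨⟨by omega, by omega⟩, ?_, ?_⟩
        · intro x hx
          rw [Finset.mem_Icc]
          have hxS : x ∈ S := Finset.mem_of_mem_erase hx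
          refine ⟨(Finset.mem_Icc.1 (hsub hxS)).1, ?_⟩
          rw [hmk]
          exact Finset.le_sup (f := id) hx
        · rw [hmk]; exact htmem
      · -- hj
        rintro ⟨k, S'⟩ hx
        simp only [Finset.mem_sigma, Finset.mem_Icc, Finset.mem_filter,
          Finset.mem_powerset] at hx
        obtain ⟨⟨hk1, hk2⟩, hsub, hmem⟩ := hx
        simp only [Finset.mem_filter, Finset.mem_powerset]
        have hmk1 : 1 ≤ m - k := (Finset.mem_Icc.1 (hsub hmem)).1
        refine ⟨⟨?_, Finset.mem_insert_self m S'⟩, ?_⟩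
        · intro x hx
          rcases Finset.mem_insert.1 hx with h | hx
          · rw [h, Finset.mem_Icc]; exact ⟨hm, le_refl m⟩
          · have := Finset.mem_Icc.1 (hsub hx)
            rw [Finset.mem_Icc]; omega
        · intro h
          have : (m - k) ∈ ({m} : Finset ℕ) := h ▸ Finset.mem_insert_of_mem hmem
          rw [Finset.mem_singleton] at this
          omega
      · -- left_inv
        intro S hS
        simp only [Finset.mem_filter, Finset.mem_powerset] at hS
        exact Finset.insert_erase hS.1.2
      · -- right_inv
        rintro ⟨k, S'⟩ hx
        simp only [Finset.mem_sigma, Finset.mem_Icc, Finset.mem_filter,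
          Finset.mem_powerset] at hx
        obtain ⟨⟨hk1, hk2⟩, hsub, hmem⟩ := hx
        have hmS' : m ∉ S' := by
          intro h
          have := (Finset.mem_Icc.1 (hsub h)).2
          omega
        have herase : (insert m S').erase m = S' := Finset.erase_insert hmS'
        have hsup : S'.sup id = m - k := by
          apply le_antisymm
          · apply Finset.sup_le
            intro x hx
            exact (Finset.mem_Icc.1 (hsub hx)).2
          · exact Finset.le_sup (f := id) hmem
        show (⟨m - ((insert m S').erase m).sup id, (insert m S').erase m⟩ :
            Σ _ : ℕ, Finset ℕ) = ⟨k, S'⟩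
        rw [herase, hsup]
        have hkk : m - (m - k) = k := by omega
        rw [hkk]
      · -- values
        intro S hS
        simp only [Finset.mem_filter, Finset.mem_powerset] at hS
        rw [Finset.insert_erase hS.1.2]
    rw [key, Finset.sum_sigma]
    apply Finset.sum_congr rfl
    intro k hk
    rw [Finset.mem_Icc] at hk
    rw [Tm, Finset.mul_sum]
    apply Finset.sum_congr rfl
    intro S' hS'
    simp only [Finset.mem_filter, Finset.mem_powerset] at hS'
    obtain ⟨hsub, hmem⟩ := hS'
    have hlt : ∀ x ∈ S', x < m := by
      intro x hx
      have := (Finset.mem_Icc.1 (hsub hx)).2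
      omega
    have hmS' : m ∉ S' := fun h => lt_irrefl m (hlt m h)
    have hne' : S'.Nonempty := ⟨m - k, hmem⟩
    have hcard : (insert m S').card = S'.card + 1 := Finset.card_insert_of_notMem hmS'
    rw [hcard, sort_insert_max_s9 S' m hlt, chainProd_append, sort_getLastD_max' S' hne']
    have hmax : S'.max' hne' = m - k := by
      apply le_antisymm
      · exact Finset.max'_le _ _ _ fun x hx => (Finset.mem_Icc.1 (hsub hx)).2
      · exact Finset.le_max' _ _ hmem
    rw [hmax, pow_succ, mul_inv]
    ring

lemma Tm_rec (a b0 : ℂ) (hb0 : 1 + b0 ≠ 0) (b : ℕ → ℂ) (j m : ℕ) (hm : 1 ≤ m) :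
    (1 + b0) * ((m : ℂ) + (j : ℂ)) * Tm a b0 b j m =
      (a * (m : ℂ) - (j : ℂ)) * b m +
      ∑ k ∈ Finset.Icc 1 (m - 1),
        (a * (k : ℂ) - ((m - k : ℕ) : ℂ) - (j : ℂ)) * b k * Tm a b0 b j (m - k) := by
  have hmj : (m : ℂ) + (j : ℂ) ≠ 0 := by
    have : ((m + j : ℕ) : ℂ) ≠ 0 := Nat.cast_ne_zero.2 (by omega)
    push_cast at this
    exact this
  rw [Tm_split a b0 b j m hm, mul_add, Finset.mul_sum]
  congr 1
  · rw [gterm]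
    simp only [Nat.cast_zero, Nat.sub_zero, sub_zero, mul_zero]
    field_simp
  · apply Finset.sum_congr rfl
    intro k hk
    rw [Finset.mem_Icc] at hk
    rw [gterm]
    have h1 : m - (m - k) = k := by omega
    have h2 : ((m - k : ℕ) : ℂ) = (m : ℂ) - (k : ℂ) := by
      rw [Nat.cast_sub (by omega)]
    rw [h1, h2]
    field_simp
    ring

lemma tri_swap (f : ℕ → ℕ → ℂ) (n : ℕ) :
    ∑ k ∈ Finset.Icc 1 (n - 1), ∑ j ∈ Finset.Icc 1 (n - k - 1), f k j
      = ∑ j ∈ Finset.Icc 1 (n - 1), ∑ k ∈ Finset.Icc 1 (n - j - 1), f k j := by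
  have key : ∀ k : ℕ, Finset.Icc 1 (n - k - 1) =
      (Finset.Icc 1 (n - 1)).filter (fun j => k + j ≤ n - 1) := by
    intro k
    ext x
    simp only [Finset.mem_Icc, Finset.mem_filter]
    omega
  have key2 : ∀ j : ℕ, Finset.Icc 1 (n - j - 1) =
      (Finset.Icc 1 (n - 1)).filter (fun k => k + j ≤ n - 1) := by
    intro j
    ext x
    simp only [Finset.mem_Icc, Finset.mem_filter]
    omega
  calc ∑ k ∈ Finset.Icc 1 (n - 1), ∑ j ∈ Finset.Icc 1 (n - k - 1), f k j
      = ∑ k ∈ Finset.Icc 1 (n - 1), ∑ j ∈ Finset.Icc 1 (n - 1),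
          if k + j ≤ n - 1 then f k j else 0 := by
        refine Finset.sum_congr rfl fun k _ => ?_
        rw [key k, Finset.sum_filter]
    _ = ∑ j ∈ Finset.Icc 1 (n - 1), ∑ k ∈ Finset.Icc 1 (n - 1),
          if k + j ≤ n - 1 then f k j else 0 := Finset.sum_comm
    _ = ∑ j ∈ Finset.Icc 1 (n - 1), ∑ k ∈ Finset.Icc 1 (n - j - 1), f k j := by
        refine Finset.sum_congr rfl fun j _ => ?_
        rw [key2 j, Finset.sum_filter]

/-- **Explicit form of the generalized J.C.P. Miller formula.**  Let
`a ∈ ℂ`, `b₀ ∈ ℂ` with `1 + b₀ ≠ 0` and `(b_n)_{n≥1}` complex numbers.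
Define `c₁ = a b₁ (1+b₀)^{a-1}` and recursively, for `n ≥ 2`,
`c_n = (1/(n(1+b₀))) [ n a (1+b₀)^a b_n + ∑_{k=1}^{n-1} (k a-(n-k)) b_k c_{n-k} ]`.
Then for every `n ≥ 1`,
`c_n = a (1+b₀)^{a-1} [ b_n + ∑_{j=1}^{n-1} b_j ∑_{l=1}^{n-j} (1+b₀)^{-l}
  ∑_{{s₁<…<s_l}⊆[n-j], s_l=n-j} ∏_{q=1}^l
    ((a(s_q-s_{q-1}) - s_{q-1} - j)/(s_q+j)) b_{s_q-s_{q-1}} ]`,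
with `s₀ := 0`; the inner sum runs over subsets `S ⊆ {1,…,n-j}` with
`n-j ∈ S` and `#S = l`, listed increasingly (so `s_q` is the `q`-th
smallest element of `S`). -/
theorem explicit_general_jcp_miller (a b0 : ℂ) (hb0 : 1 + b0 ≠ 0)
    (b c : ℕ → ℂ)
    (hc1 : c 1 = a * b 1 * (1 + b0) ^ (a - 1))
    (hrec : ∀ n : ℕ, 2 ≤ n →
      c n = (1 / ((n : ℂ) * (1 + b0))) *
        ((n : ℂ) * a * (1 + b0) ^ a * b n +
          ∑ k ∈ Finset.Icc 1 (n - 1),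
            ((k : ℂ) * a - ((n - k : ℕ) : ℂ)) * b k * c (n - k))) :
    ∀ n : ℕ, 1 ≤ n →
      c n = a * (1 + b0) ^ (a - 1) *
        (b n + ∑ j ∈ Finset.Icc 1 (n - 1), b j *
          ∑ l ∈ Finset.Icc 1 (n - j), ((1 + b0) ^ l)⁻¹ *
            ∑ S ∈ (Finset.Icc 1 (n - j)).powerset.filter
                (fun S => (n - j) ∈ S ∧ S.card = l),
              ∏ q ∈ Finset.range l,
                (fun sq sp : ℕ =>
                    ((a * ((sq : ℂ) - (sp : ℂ)) - (sp : ℂ) - (j : ℂ)) /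
                        ((sq : ℂ) + (j : ℂ))) * b (sq - sp))
                  ((S.sort (· ≤ ·)).getD q 0)
                  (if q = 0 then 0 else (S.sort (· ≤ ·)).getD (q - 1) 0)) := by
  have key : ∀ n : ℕ, 1 ≤ n → c n = a * (1 + b0) ^ (a - 1) *
      (b n + ∑ j ∈ Finset.Icc 1 (n - 1), b j * Tm a b0 b j (n - j)) := by
    intro n
    induction n using Nat.strong_induction_on with
    | _ n ih =>
      intro hn
      rcases eq_or_lt_of_le hn with h1 | h2
      · rw [← h1, hc1]
        norm_num
        ring
      · have hn2 : 2 ≤ n := h2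
        rw [hrec n hn2]
        have hB : (1 + b0) ^ a = (1 + b0) * (1 + b0) ^ (a - 1) := by
          have h := Complex.cpow_add 1 (a - 1) hb0
          rw [Complex.cpow_one] at h
          rw [← h]
          ring_nf
        have hsum : ∀ k ∈ Finset.Icc 1 (n - 1), c (n - k) =
            a * (1 + b0) ^ (a - 1) * (b (n - k) +
              ∑ j ∈ Finset.Icc 1 (n - k - 1), b j * Tm a b0 b j (n - k - j)) := by
          intro k hk
          rw [Finset.mem_Icc] at hk
          exact ih (n - k) (by omega) (by omega)
        have hrw : ∑ k ∈ Finset.Icc 1 (n - 1),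
            ((k : ℂ) * a - ((n - k : ℕ) : ℂ)) * b k * c (n - k)
            = ∑ k ∈ Finset.Icc 1 (n - 1), ((k : ℂ) * a - ((n - k : ℕ) : ℂ)) * b k *
                (a * (1 + b0) ^ (a - 1) * (b (n - k) +
                  ∑ j ∈ Finset.Icc 1 (n - k - 1), b j * Tm a b0 b j (n - k - j))) :=
          Finset.sum_congr rfl fun k hk => by rw [hsum k hk]
        rw [hrw]
        have hn0 : ((n : ℂ)) * (1 + b0) ≠ 0 :=
          mul_ne_zero (Nat.cast_ne_zero.2 (by omega)) hb0
        rw [one_div, inv_mul_eq_iff_eq_mul₀ hn0]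
        rw [hB]
        -- key combinatorial identity
        have hT : ∀ j ∈ Finset.Icc 1 (n - 1), (n : ℂ) * (1 + b0) * Tm a b0 b j (n - j)
            = (a * ((n - j : ℕ) : ℂ) - (j : ℂ)) * b (n - j) +
              ∑ k ∈ Finset.Icc 1 (n - j - 1),
                (a * (k : ℂ) - ((n - j - k : ℕ) : ℂ) - (j : ℂ)) * b k *
                  Tm a b0 b j (n - j - k) := by
          intro j hj
          rw [Finset.mem_Icc] at hj
          have h := Tm_rec a b0 hb0 b j (n - j) (by omega)
          have hcast : ((n - j : ℕ) : ℂ) + (j : ℂ) = (n : ℂ) := by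
            rw [Nat.cast_sub (by omega)]; ring
          calc (n : ℂ) * (1 + b0) * Tm a b0 b j (n - j)
              = (1 + b0) * (((n - j : ℕ) : ℂ) + (j : ℂ)) * Tm a b0 b j (n - j) := by
                rw [hcast]; ring
            _ = _ := h
        have I1 : ∑ k ∈ Finset.Icc 1 (n - 1),
            ((k : ℂ) * a - ((n - k : ℕ) : ℂ)) * b k * b (n - k)
            = ∑ j ∈ Finset.Icc 1 (n - 1),
                (a * ((n - j : ℕ) : ℂ) - (j : ℂ)) * b j * b (n - j) := by
          apply Finset.sum_nbij' (fun k => n - k) (fun k => n - k)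
          · intro k hk; rw [Finset.mem_Icc] at hk ⊢; omega
          · intro k hk; rw [Finset.mem_Icc] at hk ⊢; omega
          · intro k hk; rw [Finset.mem_Icc] at hk; omega
          · intro k hk; rw [Finset.mem_Icc] at hk; omega
          · intro k hk
            rw [Finset.mem_Icc] at hk
            have h1 : n - (n - k) = k := by omega
            rw [h1]
            ring
        have I2 : ∑ k ∈ Finset.Icc 1 (n - 1), ∑ j ∈ Finset.Icc 1 (n - k - 1),
            ((k : ℂ) * a - ((n - k : ℕ) : ℂ)) * b k * (b j * Tm a b0 b j (n - k - j))
            = ∑ j ∈ Finset.Icc 1 (n - 1), ∑ k ∈ Finset.Icc 1 (n - j - 1),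
                b j * ((a * (k : ℂ) - ((n - j - k : ℕ) : ℂ) - (j : ℂ)) * b k *
                  Tm a b0 b j (n - j - k)) := by
          rw [tri_swap]
          refine Finset.sum_congr rfl fun j hj => Finset.sum_congr rfl fun k hk => ?_
          rw [Finset.mem_Icc] at hj hk
          have e1 : n - k - j = n - j - k := by omega
          have e2 : ((n - k : ℕ) : ℂ) = ((n - j - k : ℕ) : ℂ) + (j : ℂ) := by
            rw [Nat.cast_sub (by omega : k ≤ n), Nat.cast_sub (by omega : k ≤ n - j),
              Nat.cast_sub (by omega : j ≤ n)]
            ring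
          rw [e1, e2]
          ring
        have main : ∑ k ∈ Finset.Icc 1 (n - 1),
            ((k : ℂ) * a - ((n - k : ℕ) : ℂ)) * b k *
              (b (n - k) + ∑ j ∈ Finset.Icc 1 (n - k - 1), b j * Tm a b0 b j (n - k - j))
            = ∑ j ∈ Finset.Icc 1 (n - 1),
                b j * ((n : ℂ) * (1 + b0) * Tm a b0 b j (n - j)) := by
          calc ∑ k ∈ Finset.Icc 1 (n - 1),
              ((k : ℂ) * a - ((n - k : ℕ) : ℂ)) * b k *
                (b (n - k) + ∑ j ∈ Finset.Icc 1 (n - k - 1), b j * Tm a b0 b j (n - k - j))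
              = ∑ k ∈ Finset.Icc 1 (n - 1),
                  (((k : ℂ) * a - ((n - k : ℕ) : ℂ)) * b k * b (n - k) +
                    ∑ j ∈ Finset.Icc 1 (n - k - 1),
                      ((k : ℂ) * a - ((n - k : ℕ) : ℂ)) * b k *
                        (b j * Tm a b0 b j (n - k - j))) := by
                refine Finset.sum_congr rfl fun k _ => ?_
                rw [mul_add, Finset.mul_sum]
            _ = (∑ k ∈ Finset.Icc 1 (n - 1),
                  ((k : ℂ) * a - ((n - k : ℕ) : ℂ)) * b k * b (n - k)) +
                ∑ k ∈ Finset.Icc 1 (n - 1), ∑ j ∈ Finset.Icc 1 (n - k - 1),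
                  ((k : ℂ) * a - ((n - k : ℕ) : ℂ)) * b k *
                    (b j * Tm a b0 b j (n - k - j)) := Finset.sum_add_distrib
            _ = (∑ j ∈ Finset.Icc 1 (n - 1),
                  (a * ((n - j : ℕ) : ℂ) - (j : ℂ)) * b j * b (n - j)) +
                ∑ j ∈ Finset.Icc 1 (n - 1), ∑ k ∈ Finset.Icc 1 (n - j - 1),
                  b j * ((a * (k : ℂ) - ((n - j - k : ℕ) : ℂ) - (j : ℂ)) * b k *
                    Tm a b0 b j (n - j - k)) := by rw [I1, I2]
            _ = ∑ j ∈ Finset.Icc 1 (n - 1),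
                  b j * ((a * ((n - j : ℕ) : ℂ) - (j : ℂ)) * b (n - j) +
                    ∑ k ∈ Finset.Icc 1 (n - j - 1),
                      (a * (k : ℂ) - ((n - j - k : ℕ) : ℂ) - (j : ℂ)) * b k *
                        Tm a b0 b j (n - j - k)) := by
                rw [← Finset.sum_add_distrib]
                refine Finset.sum_congr rfl fun j _ => ?_
                rw [mul_add, Finset.mul_sum]
                congr 1
                ring
            _ = ∑ j ∈ Finset.Icc 1 (n - 1),
                  b j * ((n : ℂ) * (1 + b0) * Tm a b0 b j (n - j)) := by
                refine Finset.sum_congr rfl fun j hj => ?_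
                rw [hT j hj]
        -- now assemble
        have step : ∑ k ∈ Finset.Icc 1 (n - 1), ((k : ℂ) * a - ((n - k : ℕ) : ℂ)) * b k *
            (a * (1 + b0) ^ (a - 1) * (b (n - k) +
              ∑ j ∈ Finset.Icc 1 (n - k - 1), b j * Tm a b0 b j (n - k - j)))
            = a * (1 + b0) ^ (a - 1) * ∑ k ∈ Finset.Icc 1 (n - 1),
                ((k : ℂ) * a - ((n - k : ℕ) : ℂ)) * b k *
                  (b (n - k) + ∑ j ∈ Finset.Icc 1 (n - k - 1), b j * Tm a b0 b j (n - k - j)) := by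
          rw [Finset.mul_sum]
          exact Finset.sum_congr rfl fun k _ => by ring
        rw [step, main]
        have step2 : ∑ j ∈ Finset.Icc 1 (n - 1),
            b j * ((n : ℂ) * (1 + b0) * Tm a b0 b j (n - j))
            = (n : ℂ) * (1 + b0) * ∑ j ∈ Finset.Icc 1 (n - 1), b j * Tm a b0 b j (n - j) := by
          rw [Finset.mul_sum]
          exact Finset.sum_congr rfl fun j _ => by ring
        rw [step2]
        ring
  intro n hn
  rw [key n hn]
  exact congrArg _ (congrArg _ (Finset.sum_congr rfl fun j _ =>
    congrArg _ (Tm_eq a b0 b j (n - j))))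
end

section
/- Let n be a positive integer and B = [b_{i,j}] the n×n lower-triangular complex matrix with b_{i,i} = 1, b_{i,j} = 0 for i < j, and b_{i,j} = -((i-j)a - j) b_{i-j} / (i(1+b₀)) for i > j, where a ∈ ℂ, 1+b₀ ≠ 0, and (b_k) are complex numbers. Then for i < j, the (i,j)-cofactor of B equals B_i^j = Σ_{l=1}^{j-i} (1+b₀)^{-l} Σ_{{s₁<...<s_l}⊆[j-i], s_l=j-i} Π_{q=1}^{l} ((s_q - s_{q-1})a - s_{q-1} - i)/(s_q + i) · b_{s_q - s_{q-1}}, with s₀ := 0. -/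
open Finset

namespace JCP

/-- max of a finset of naturals via sorted list (0 for empty). -/
def mu (S : Finset ℕ) : ℕ := (S.sort (· ≤ ·)).getLastD 0

lemma mu_empty : mu ∅ = 0 := by simp [mu]

lemma sort_ne_nil {S : Finset ℕ} (hS : S.Nonempty) : S.sort (· ≤ ·) ≠ [] := by
  intro h
  have h2 := Finset.length_sort (α := ℕ) (· ≤ ·) (s := S)
  rw [h] at h2
  simp only [List.length_nil] at h2
  exact absurd h2.symm hS.card_pos.ne' 

lemma mu_eq_max' {S : Finset ℕ} (hS : S.Nonempty) : mu S = S.max' hS := by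
  rw [Finset.max'_eq_sorted_last, mu]
  rw [List.getLastD_eq_getLast? , List.getLast?_eq_getLast (sort_ne_nil hS),
    Option.getD_some, List.getLast_eq_getElem]

lemma mu_mem {S : Finset ℕ} (hS : S.Nonempty) : mu S ∈ S := by
  rw [mu_eq_max' hS]; exact S.max'_mem hS

lemma le_mu {S : Finset ℕ} {x : ℕ} (hx : x ∈ S) : x ≤ mu S := by
  rw [mu_eq_max' ⟨x, hx⟩]; exact S.le_max' _ hx

lemma sort_insert_max {S : Finset ℕ} {D : ℕ} (h : ∀ x ∈ S, x < D) :
    (insert D S).sort (· ≤ ·) = S.sort (· ≤ ·) ++ [D] := by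
  have hD : D ∉ S := fun hmem => (h D hmem).false
  apply List.Perm.eq_of_pairwise' (Finset.pairwise_sort _ _)
  · rw [List.pairwise_append]
    refine ⟨Finset.pairwise_sort _ _, List.pairwise_singleton _ _, ?_⟩
    intro x hx y hy
    rw [List.mem_singleton] at hy
    subst hy
    exact (h x (by rwa [Finset.mem_sort] at hx)).le
  · rw [← Multiset.coe_eq_coe]
    have h1 : ((insert D S).sort (· ≤ ·) : Multiset ℕ) = (insert D S).val :=
      Finset.sort_eq _ _
    have h2 : ((S.sort (· ≤ ·) ++ [D] : List ℕ) : Multiset ℕ)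
        = S.val + {D} := by
      rw [← Multiset.coe_add, Finset.sort_eq, Multiset.coe_singleton]
    rw [h1, h2, Finset.insert_val_of_notMem hD]
    rw [add_comm, ← Multiset.singleton_add]

/-- chain product along a list, with `p` the previous element. -/
noncomputable def cp (h : ℕ → ℕ → ℂ) : ℕ → List ℕ → ℂ
  | _, [] => 1
  | p, s :: t => h s p * cp h s t

lemma cp_prod (h : ℕ → ℕ → ℂ) : ∀ (L : List ℕ) (p : ℕ),
    (∏ q ∈ Finset.range L.length,
      h (L.getD q 0) (if q = 0 then p else L.getD (q - 1) 0)) = cp h p L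
  | [], p => by simp [cp]
  | s :: t, p => by
    rw [List.length_cons, Finset.prod_range_succ']
    have h1 : ∀ q ∈ Finset.range t.length,
        h ((s :: t).getD (q + 1) 0)
          (if q + 1 = 0 then p else (s :: t).getD (q + 1 - 1) 0)
        = h (t.getD q 0) (if q = 0 then s else t.getD (q - 1) 0) := by
      intro q _
      rcases Nat.eq_zero_or_pos q with hq | hq
      · subst hq; simp
      · obtain ⟨r, rfl⟩ := Nat.exists_eq_add_of_lt hq
        simp only [Nat.zero_add, Nat.add_sub_cancel, Nat.succ_ne_zero, if_false,
          List.getD_cons_succ]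
    rw [Finset.prod_congr rfl h1, cp_prod h t s]
    simp only [List.getD_cons_zero, if_pos rfl, cp, if_true]
    ring

lemma cp_append (h : ℕ → ℕ → ℂ) : ∀ (L : List ℕ) (p x : ℕ),
    cp h p (L ++ [x]) = cp h p L * h x (L.getLastD p)
  | [], p, x => by simp [cp]
  | s :: t, p, x => by
    have h3 : cp h s (t ++ [x]) = cp h s t * h x (t.getLastD s) := cp_append h t s x
    show h s p * cp h s (t ++ [x]) = _
    simp only [cp, h3, List.getLastD_cons]
    ring

noncomputable def gg (a : ℂ) (b : ℕ → ℂ) (i sq sp : ℕ) : ℂ :=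
  (((sq : ℂ) - (sp : ℂ)) * a - (sp : ℂ) - ((i + 1 : ℕ) : ℂ)) /
      ((sq : ℂ) + ((i + 1 : ℕ) : ℂ)) * b (sq - sp)

noncomputable def G (a b0 : ℂ) (b : ℕ → ℂ) (i D : ℕ) : ℂ :=
  ∑ S ∈ (Finset.Icc 1 D).powerset.filter (fun S => D ∈ S),
    ((1 + b0) ^ S.card)⁻¹ * cp (gg a b i) 0 (S.sort (· ≤ ·))

lemma G_rec (a b0 : ℂ) (b : ℕ → ℂ) (i : ℕ) {D : ℕ} (hD : 1 ≤ D) :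
    G a b0 b i D = (1 + b0)⁻¹ * gg a b i D 0
      + ∑ e ∈ Finset.Icc 1 (D - 1), (1 + b0)⁻¹ * gg a b i D e * G a b0 b i e := by
  classical
  have step1 : G a b0 b i D = ∑ S ∈ (Finset.Icc 1 (D-1)).powerset,
      ((1 + b0) ^ (S.card + 1))⁻¹ * cp (gg a b i) 0 (S.sort (· ≤ ·))
        * gg a b i D (mu S) := by
    rw [G]
    refine Finset.sum_bij' (fun S _ => S.erase D) (fun S _ => insert D S)
      ?_ ?_ ?_ ?_ ?_
    · intro S hS
      rw [Finset.mem_filter, Finset.mem_powerset] at hS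
      rw [Finset.mem_powerset]
      intro x hx
      rw [Finset.mem_erase] at hx
      have := hS.1 hx.2
      rw [Finset.mem_Icc] at this ⊢
      omega
    · intro S hS
      rw [Finset.mem_powerset] at hS
      rw [Finset.mem_filter, Finset.mem_powerset]
      refine ⟨?_, Finset.mem_insert_self _ _⟩
      intro x hx
      rcases Finset.mem_insert.1 hx with rfl | hx
      · rw [Finset.mem_Icc]; omega
      · have := hS hx
        rw [Finset.mem_Icc] at this ⊢
        omega
    · intro S hS
      rw [Finset.mem_filter] at hS
      exact Finset.insert_erase hS.2
    · intro S hS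
      rw [Finset.mem_powerset] at hS
      apply Finset.erase_insert
      intro hmem
      have := hS hmem
      rw [Finset.mem_Icc] at this
      omega
    · intro S hS
      rw [Finset.mem_filter, Finset.mem_powerset] at hS
      have hmemD : ∀ x ∈ S.erase D, x < D := by
        intro x hx
        rw [Finset.mem_erase] at hx
        have := hS.1 hx.2
        rw [Finset.mem_Icc] at this
        omega
      have hins : insert D (S.erase D) = S := Finset.insert_erase hS.2
      have hsort : S.sort (· ≤ ·) = (S.erase D).sort (· ≤ ·) ++ [D] := by
        conv_lhs => rw [← hins]
        exact sort_insert_max hmemD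
      have hcard : S.card = (S.erase D).card + 1 := by
        rw [Finset.card_erase_of_mem hS.2]
        have : 1 ≤ S.card := Finset.card_pos.2 ⟨D, hS.2⟩
        omega
      rw [hsort, cp_append, hcard]
      rw [mu]
      ring
  rw [step1]
  have hmaps : ∀ S ∈ (Finset.Icc 1 (D-1)).powerset, mu S ∈ Finset.range D := by
    intro S hS
    rw [Finset.mem_powerset] at hS
    rcases S.eq_empty_or_nonempty with rfl | hne
    · rw [mu_empty, Finset.mem_range]; omega
    · have := hS (mu_mem hne)
      rw [Finset.mem_Icc] at this
      rw [Finset.mem_range]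
      omega
  rw [← Finset.sum_fiberwise_of_maps_to hmaps]
  have hrange : Finset.range D = insert 0 (Finset.Icc 1 (D-1)) := by
    ext k
    simp only [Finset.mem_range, Finset.mem_insert, Finset.mem_Icc]
    omega
  rw [hrange, Finset.sum_insert (by simp)]
  congr 1
  · -- fiber at 0 : only the empty set
    have hfib : (Finset.Icc 1 (D-1)).powerset.filter (fun S => mu S = 0)
        = {∅} := by
      ext S
      simp only [Finset.mem_filter, Finset.mem_powerset, Finset.mem_singleton]
      constructor
      · rintro ⟨hsub, hmu⟩
        rcases S.eq_empty_or_nonempty with rfl | hne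
        · rfl
        · exfalso
          have h1 := hsub (mu_mem hne)
          rw [Finset.mem_Icc, hmu] at h1
          omega
      · rintro rfl
        exact ⟨Finset.empty_subset _, mu_empty⟩
    rw [hfib, Finset.sum_singleton, mu_empty]
    simp only [Finset.sort_empty, Finset.card_empty, cp, Nat.zero_add, pow_one]
    ring
  · -- fibers at e ≥ 1
    apply Finset.sum_congr rfl
    intro e he
    rw [Finset.mem_Icc] at he
    have hfib : (Finset.Icc 1 (D-1)).powerset.filter (fun S => mu S = e)
        = (Finset.Icc 1 e).powerset.filter (fun S => e ∈ S) := by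
      ext S
      simp only [Finset.mem_filter, Finset.mem_powerset]
      constructor
      · rintro ⟨hsub, hmu⟩
        have hne : S.Nonempty := by
          rcases S.eq_empty_or_nonempty with rfl | hne
          · rw [mu_empty] at hmu; omega
          · exact hne
        refine ⟨?_, hmu ▸ mu_mem hne⟩
        intro x hx
        have h1 := hsub hx
        rw [Finset.mem_Icc] at h1 ⊢
        exact ⟨h1.1, hmu ▸ le_mu hx⟩
      · rintro ⟨hsub, hmem⟩
        have hne : S.Nonempty := ⟨e, hmem⟩
        constructor
        · intro x hx
          have h1 := hsub hx
          rw [Finset.mem_Icc] at h1 ⊢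
          omega
        · have h1 : mu S ≤ e := by
            have := hsub (mu_mem hne)
            rw [Finset.mem_Icc] at this
            exact this.2
          exact le_antisymm h1 (le_mu hmem)
    rw [hfib, G, Finset.mul_sum]
    apply Finset.sum_congr rfl
    intro S hS
    rw [Finset.mem_filter] at hS
    have hmu : mu S = e := by
      have hne : S.Nonempty := ⟨e, hS.2⟩
      refine le_antisymm ?_ (le_mu hS.2)
      have := (Finset.mem_powerset.1 hS.1) (mu_mem hne)
      rw [Finset.mem_Icc] at this
      exact this.2
    rw [hmu, pow_succ, mul_inv]
    ring


lemma cofactor_eq_adjugate {n : ℕ} (B : Matrix (Fin (n+1)) (Fin (n+1)) ℂ)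
    (i j : Fin (n+1)) :
    (-1 : ℂ) ^ ((i : ℕ) + (j : ℕ)) * (B.submatrix i.succAbove j.succAbove).det
      = Matrix.adjugate B j i := by
  rw [Matrix.adjugate_apply, Matrix.det_succ_row _ i]
  rw [Finset.sum_eq_single j ?h1 ?h2]
  · have hsub : (B.updateRow i (Pi.single j 1)).submatrix i.succAbove j.succAbove
        = B.submatrix i.succAbove j.succAbove := by
      ext x y
      simp only [Matrix.submatrix_apply]
      rw [Matrix.updateRow_ne (Fin.succAbove_ne i x)]
    rw [hsub, Matrix.updateRow_self, Pi.single_eq_same, mul_one]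
  case h1 =>
    intro k _ hk
    rw [Matrix.updateRow_self, Pi.single_eq_of_ne hk, mul_zero, zero_mul]
  case h2 =>
    intro h; exact absurd (Finset.mem_univ j) h

end JCP

/-- **Cofactors of the J.C.P. Miller matrix.**  Let `B` be the
`n × n` (`n = m+1`) unipotent lower-triangular complex matrix with
`1`-indexed entries `b_{i,i} = 1`, `b_{i,j} = 0` for `i < j` and
`b_{i,j} = -((i-j)a - j) b_{i-j} / (i(1+b₀))` for `i > j`.  Then for
`i < j` the `(i,j)`-cofactor of `B` (i.e. `(-1)^{i+j}` times the
determinant of `B` with row `i` and column `j` deleted) equals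
`∑_{l=1}^{j-i} (1+b₀)^{-l} ∑_{{s₁<…<s_l}⊆[j-i], s_l=j-i} ∏_{q=1}^l
  ((s_q-s_{q-1})a - s_{q-1} - i)/(s_q+i) · b_{s_q-s_{q-1}}`, with
`s₀ := 0`; the inner sum runs over subsets `S ⊆ {1,…,j-i}` with
`j-i ∈ S` and `#S = l`, listed increasingly.  Indices `i j : Fin (m+1)`
are `0`-based, so the `1`-indexed row/column numbers are `i+1`, `j+1`. -/
theorem jcp_miller_matrix_cofactor (m : ℕ) (a b0 : ℂ) (hb0 : 1 + b0 ≠ 0)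
    (b : ℕ → ℂ) (B : Matrix (Fin (m + 1)) (Fin (m + 1)) ℂ)
    (hB : ∀ i j : Fin (m + 1), B i j =
      if (i : ℕ) = (j : ℕ) then 1
      else if (i : ℕ) < (j : ℕ) then 0
      else -((((i : ℕ) - (j : ℕ) : ℕ) : ℂ) * a - ((j : ℕ) + 1 : ℕ)) *
        b ((i : ℕ) - (j : ℕ)) / ((((i : ℕ) + 1 : ℕ) : ℂ) * (1 + b0))) :
    ∀ i j : Fin (m + 1), (i : ℕ) < (j : ℕ) →
      (-1 : ℂ) ^ ((i : ℕ) + (j : ℕ)) *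
          (B.submatrix i.succAbove j.succAbove).det =
        ∑ l ∈ Finset.Icc 1 ((j : ℕ) - (i : ℕ)), ((1 + b0) ^ l)⁻¹ *
          ∑ S ∈ (Finset.Icc 1 ((j : ℕ) - (i : ℕ))).powerset.filter
              (fun S => ((j : ℕ) - (i : ℕ)) ∈ S ∧ S.card = l),
            ∏ q ∈ Finset.range l,
              (fun sq sp : ℕ =>
                  ((((sq : ℂ) - (sp : ℂ)) * a - (sp : ℂ) - (((i : ℕ) + 1 : ℕ) : ℂ)) /
                      ((sq : ℂ) + (((i : ℕ) + 1 : ℕ) : ℂ))) * b (sq - sp))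
                ((S.sort (· ≤ ·)).getD q 0)
                (if q = 0 then 0 else (S.sort (· ≤ ·)).getD (q - 1) 0) := by
  classical
  intro i j hij
  set C : Matrix (Fin (m + 1)) (Fin (m + 1)) ℂ := fun t z =>
    if (t : ℕ) = (z : ℕ) then 1
    else if (t : ℕ) < (z : ℕ) then 0
    else JCP.G a b0 b (z : ℕ) ((t : ℕ) - (z : ℕ)) with hC
  have hCapp : ∀ t z : Fin (m + 1), C t z =
      if (t : ℕ) = (z : ℕ) then 1
      else if (t : ℕ) < (z : ℕ) then 0
      else JCP.G a b0 b (z : ℕ) ((t : ℕ) - (z : ℕ)) := fun _ _ => rfl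
  -- determinant of B is 1
  have hdet : B.det = 1 := by
    have htri : B.BlockTriangular OrderDual.toDual := by
      intro r c hrc
      have h1 : (r : ℕ) < (c : ℕ) := hrc
      rw [hB, if_neg (by omega), if_pos h1]
    rw [Matrix.det_of_lowerTriangular B htri]
    apply Finset.prod_eq_one
    intro t _
    rw [hB, if_pos rfl]
  -- B * C = 1
  have hBC : B * C = 1 := by
    ext x z
    rw [Matrix.mul_apply]
    rcases Nat.lt_trichotomy (x : ℕ) (z : ℕ) with hxz | hxz | hxz
    · -- x < z : both sides 0
      have hne : x ≠ z := fun h => by rw [h] at hxz; omega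
      rw [Matrix.one_apply_ne hne]
      apply Finset.sum_eq_zero
      intro t _
      rcases Nat.lt_or_ge (t : ℕ) (z : ℕ) with h1 | h1
      · rw [hCapp, if_neg (by omega), if_pos h1, mul_zero]
      · rw [hB, if_neg (by omega), if_pos (by omega), zero_mul]
    · -- x = z
      have hxz' : x = z := Fin.ext hxz
      subst hxz'
      rw [Matrix.one_apply_eq]
      rw [Finset.sum_eq_single x ?h1 ?h2]
      · rw [hB, if_pos rfl, hCapp, if_pos rfl, mul_one]
      case h1 =>
        intro t _ ht
        have htv : (t : ℕ) ≠ (x : ℕ) := fun h => ht (Fin.ext h)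
        rcases Nat.lt_or_ge (t : ℕ) (x : ℕ) with h1 | h1
        · rw [hCapp, if_neg htv, if_pos h1, mul_zero]
        · rw [hB, if_neg (fun h => htv h.symm), if_pos (by omega), zero_mul]
      case h2 =>
        intro h; exact absurd (Finset.mem_univ x) h
    · -- main case : z < x
      have hne : x ≠ z := fun h => by rw [h] at hxz; omega
      rw [Matrix.one_apply_ne hne]
      have hxm := x.isLt
      set z' := (z : ℕ) with hz'
      set x' := (x : ℕ) with hx'
      set D := x' - z' with hDdef
      have hD1 : 1 ≤ D := by omega
      set f : ℕ → ℂ := fun k =>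
        if hk : k < m + 1 then B x ⟨k, hk⟩ * C ⟨k, hk⟩ z else 0 with hf
      have key : (∑ t : Fin (m + 1), B x t * C t z)
          = ∑ k ∈ Finset.range (m + 1), f k := by
        rw [← Fin.sum_univ_eq_sum_range]
        apply Finset.sum_congr rfl
        intro t _
        rw [hf]
        simp only
        rw [dif_pos t.isLt, Fin.eta]
      rw [key]
      have hsub : Finset.Icc z' x' ⊆ Finset.range (m + 1) := by
        intro k hk
        rw [Finset.mem_Icc] at hk
        rw [Finset.mem_range]
        omega
      rw [← Finset.sum_subset hsub ?hvan]
      case hvan =>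
        intro k h1 h2
        rw [Finset.mem_range] at h1
        rw [Finset.mem_Icc] at h2
        rw [hf]
        simp only
        rw [dif_pos h1]
        rcases Nat.lt_or_ge k z' with h3 | h3
        · rw [hCapp, if_neg (by simp; omega), if_pos (by simpa using h3), mul_zero]
        · have h4 : x' < k := by omega
          rw [hB, if_neg (by simp; omega), if_pos (by simpa using h4), zero_mul]
      have hsplit : Finset.Icc z' x' =
          insert z' (insert x' (Finset.Icc (z' + 1) (x' - 1))) := by
        ext k
        simp only [Finset.mem_Icc, Finset.mem_insert]
        omega
      rw [hsplit, Finset.sum_insert (by simp [Finset.mem_Icc]; omega),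
        Finset.sum_insert (by rw [Finset.mem_Icc]; omega)]
      -- compute the three pieces
      have hfz : f z' = -((((x' - z' : ℕ) : ℂ)) * a - ((z' + 1 : ℕ) : ℂ)) *
          b (x' - z') / (((x' + 1 : ℕ) : ℂ) * (1 + b0)) := by
        rw [hf]
        simp only
        rw [dif_pos (by omega : z' < m + 1)]
        rw [hCapp, hB]
        simp only [← hz', ← hx']
        split_ifs with h1 h2 h3 <;>
          first
            | omega
            | (exfalso; exact h1 trivial)
            | ring
      have hfx : f x' = JCP.G a b0 b z' D := by
        rw [hf]
        simp only
        rw [dif_pos (by omega : x' < m + 1)]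
        rw [hCapp, hB]
        simp only [← hz', ← hx']
        split_ifs with h1 h2 h3 <;>
          first
            | omega
            | (exfalso; exact h1 trivial)
            | (exfalso; exact h1 rfl)
            | rw [one_mul, hDdef]
      have hfk : ∀ k ∈ Finset.Icc (z' + 1) (x' - 1), f k =
          (-((((x' - k : ℕ) : ℂ)) * a - ((k + 1 : ℕ) : ℂ)) *
            b (x' - k) / (((x' + 1 : ℕ) : ℂ) * (1 + b0))) *
          JCP.G a b0 b z' (k - z') := by
        intro k hk
        rw [Finset.mem_Icc] at hk
        rw [hf]
        simp only
        rw [dif_pos (by omega : k < m + 1)]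
        rw [hCapp, hB]
        simp only [← hz', ← hx']
        split_ifs with h1 h2 h3 h4 <;>
          first
            | omega
            | (exfalso; exact h1 trivial)
            | (exfalso; exact h1 rfl)
            | ring
      rw [hfz, hfx, Finset.sum_congr rfl hfk]
      -- use the recursion for G
      rw [JCP.G_rec a b0 b z' hD1]
      -- first claim : head term cancels f z'
      have claim1 : (1 + b0)⁻¹ * JCP.gg a b z' D 0 =
          ((((x' - z' : ℕ) : ℂ)) * a - ((z' + 1 : ℕ) : ℂ)) *
            b (x' - z') / (((x' + 1 : ℕ) : ℂ) * (1 + b0)) := by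
        rw [← hDdef, JCP.gg]
        have hd0 : D - 0 = D := by omega
        have hden : ((x' + 1 : ℕ) : ℂ) = ((D : ℕ) : ℂ) + ((z' : ℕ) : ℂ) + 1 := by
          have h5 : x' + 1 = D + z' + 1 := by omega
          rw [h5]; push_cast; ring
        have hne1 : ((D : ℕ) : ℂ) + ((z' : ℕ) : ℂ) + 1 ≠ 0 := by
          have h6 : ((D + z' + 1 : ℕ) : ℂ) ≠ 0 := Nat.cast_ne_zero.mpr (by omega)
          push_cast at h6
          exact h6
        rw [hd0, hden]
        push_cast
        simp only [div_eq_mul_inv, mul_inv]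
        ring
      -- second claim : the sums coincide
      have claim2 : ∑ e ∈ Finset.Icc 1 (D - 1),
            (1 + b0)⁻¹ * JCP.gg a b z' D e * JCP.G a b0 b z' e
          = -∑ k ∈ Finset.Icc (z' + 1) (x' - 1),
              (-((((x' - k : ℕ) : ℂ)) * a - ((k + 1 : ℕ) : ℂ)) *
                b (x' - k) / (((x' + 1 : ℕ) : ℂ) * (1 + b0))) *
              JCP.G a b0 b z' (k - z') := by
        rw [← Finset.sum_neg_distrib]
        have hIcc : Finset.Icc (z' + 1) (x' - 1)
            = (Finset.Icc 1 (D - 1)).map (addRightEmbedding z') := by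
          rw [Finset.map_add_right_Icc]
          congr 1 <;> omega
        rw [hIcc, Finset.sum_map]
        apply Finset.sum_congr rfl
        intro e he
        rw [Finset.mem_Icc] at he
        simp only [addRightEmbedding_apply]
        have h1 : e + z' - z' = e := by omega
        have h2 : x' - (e + z') = D - e := by omega
        rw [h1, h2, JCP.gg]
        have hden : ((x' + 1 : ℕ) : ℂ) = ((D : ℕ) : ℂ) + ((z' : ℕ) : ℂ) + 1 := by
          have h5 : x' + 1 = D + z' + 1 := by omega
          rw [h5]; push_cast; ring
        have hne1 : ((D : ℕ) : ℂ) + ((z' : ℕ) : ℂ) + 1 ≠ 0 := by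
          have h6 : ((D + z' + 1 : ℕ) : ℂ) ≠ 0 := Nat.cast_ne_zero.mpr (by omega)
          push_cast at h6
          exact h6
        rw [hden, Nat.cast_sub (by omega : e ≤ D)]
        push_cast
        simp only [div_eq_mul_inv, mul_inv]
        ring
      rw [claim1, claim2]
      ring
  -- adjugate B = C
  have hadj : Matrix.adjugate B = C := by
    calc Matrix.adjugate B = Matrix.adjugate B * (B * C) := by
          rw [hBC, Matrix.mul_one]
      _ = (Matrix.adjugate B * B) * C := by rw [Matrix.mul_assoc]
      _ = C := by rw [Matrix.adjugate_mul, hdet, one_smul, Matrix.one_mul]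
  -- left-hand side
  rw [JCP.cofactor_eq_adjugate B i j, hadj, hCapp, if_neg (by omega),
    if_neg (by omega)]
  -- right-hand side equals G
  set D := (j : ℕ) - (i : ℕ) with hD
  have hmaps : ∀ S ∈ (Finset.Icc 1 D).powerset.filter (fun S => D ∈ S),
      S.card ∈ Finset.Icc 1 D := by
    intro S hS
    rw [Finset.mem_filter, Finset.mem_powerset] at hS
    rw [Finset.mem_Icc]
    constructor
    · exact Finset.card_pos.2 ⟨D, hS.2⟩
    · have := Finset.card_le_card hS.1
      rwa [Nat.card_Icc, Nat.add_sub_cancel] at this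
  rw [JCP.G, ← Finset.sum_fiberwise_of_maps_to hmaps]
  apply Finset.sum_congr rfl
  intro l hl
  rw [Finset.mul_sum, Finset.filter_filter]
  apply Finset.sum_congr rfl
  intro S hS
  rw [Finset.mem_filter] at hS
  have hcard : S.card = l := hS.2.2
  have hlen : (S.sort (· ≤ ·)).length = l := by
    rw [Finset.length_sort, hcard]
  rw [hcard]
  congr 1
  rw [← JCP.cp_prod (JCP.gg a b (i : ℕ)) (S.sort (· ≤ ·)) 0, ← hlen]
  rfl
end

section
/- Let a ∈ ℂ with Re(a) < 0. Then the binomial series Σ_{n≥0} C(a,n) z^n diverges at z = -1, i.e., the series Σ_{n≥0} (-1)^n C(a,n) does not converge. -/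
open Filter Finset

/-- The generalized binomial coefficient `C(a,n) = a(a-1)⋯(a-n+1)/n!`. -/
noncomputable def cbinom (a : ℂ) (n : ℕ) : ℂ :=
  (∏ i ∈ Finset.range n, (a - (i : ℂ))) / (n.factorial : ℂ)

lemma cbinom_pascal (a : ℂ) (n : ℕ) :
    cbinom a (n + 1) = cbinom (a - 1) (n + 1) + cbinom (a - 1) n := by
  have hprod : ∀ m : ℕ, ∏ i ∈ Finset.range m, (a - 1 - (i : ℂ))
      = ∏ i ∈ Finset.range m, (a - ((i + 1 : ℕ) : ℂ)) := by
    intro m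
    refine Finset.prod_congr rfl fun i _ => ?_
    push_cast; ring
  have key : ∏ i ∈ Finset.range (n + 1), (a - (i : ℂ))
      = a * ∏ i ∈ Finset.range n, (a - 1 - (i : ℂ)) := by
    rw [Finset.prod_range_succ' (fun i => a - (i : ℂ)), hprod]
    simp [mul_comm]
  have hfac : ((n + 1).factorial : ℂ) ≠ 0 :=
    Nat.cast_ne_zero.mpr (Nat.factorial_ne_zero _)
  have hfac' : ((n).factorial : ℂ) ≠ 0 :=
    Nat.cast_ne_zero.mpr (Nat.factorial_ne_zero _)
  unfold cbinom
  rw [key]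
  have hkey2 : ∏ i ∈ Finset.range (n + 1), (a - 1 - (i : ℂ))
      = (∏ i ∈ Finset.range n, (a - 1 - (i : ℂ))) * (a - 1 - n) := by
    rw [Finset.prod_range_succ]
  rw [hkey2]
  have hfs : ((n + 1).factorial : ℂ) = (n + 1) * (n.factorial : ℂ) := by
    rw [Nat.factorial_succ]; push_cast; ring
  rw [hfs]
  have hn1 : ((n : ℂ) + 1) ≠ 0 := Nat.cast_add_one_ne_zero n
  field_simp
  ring

lemma sum_eq_cbinom (a : ℂ) (N : ℕ) :
    ∑ n ∈ Finset.range (N + 1), (-1 : ℂ) ^ n * cbinom a n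
      = (-1) ^ N * cbinom (a - 1) N := by
  induction N with
  | zero => simp [cbinom]
  | succ N ih =>
    rw [Finset.sum_range_succ, ih, cbinom_pascal a N]
    ring

lemma one_add_sum_le_prod (f : ℕ → ℝ) (hf : ∀ i, 0 ≤ f i) (N : ℕ) :
    1 + ∑ i ∈ Finset.range N, f i ≤ ∏ i ∈ Finset.range N, (1 + f i) := by
  induction N with
  | zero => simp
  | succ N ih =>
    rw [Finset.sum_range_succ, Finset.prod_range_succ]
    have hS : 0 ≤ ∑ i ∈ Finset.range N, f i :=
      Finset.sum_nonneg fun i _ => hf i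
    nlinarith [hf N, ih]

lemma norm_cbinom_ge (a : ℂ) (ha : a.re < 0) (N : ℕ) :
    1 + (-a.re) * ∑ i ∈ Finset.range N, (1 / (i + 1) : ℝ) ≤ ‖cbinom (a - 1) N‖ := by
  have hδ : 0 < -a.re := by linarith
  have hnorm : ‖cbinom (a - 1) N‖
      = ∏ i ∈ Finset.range N, (‖a - 1 - (i : ℂ)‖ / (i + 1)) := by
    unfold cbinom
    rw [norm_div, norm_prod, Finset.prod_div_distrib]
    congr 1
    rw [Complex.norm_natCast, ← Finset.prod_range_add_one_eq_factorial]
    push_cast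
    exact Finset.prod_congr rfl fun i _ => by ring
  rw [hnorm]
  have step1 : ∏ i ∈ Finset.range N, (1 + (-a.re) * (1 / (i + 1) : ℝ))
      ≤ ∏ i ∈ Finset.range N, (‖a - 1 - (i : ℂ)‖ / (i + 1)) := by
    refine Finset.prod_le_prod (fun i _ => by positivity) (fun i _ => ?_)
    have h1 : (0 : ℝ) < (i : ℝ) + 1 := by positivity
    have hre : |(a - 1 - (i : ℂ)).re| ≤ ‖a - 1 - (i : ℂ)‖ := Complex.abs_re_le_norm _
    have hre2 : (a - 1 - (i : ℂ)).re = a.re - 1 - i := by simp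
    have habs : |(a - 1 - (i : ℂ)).re| = 1 + i - a.re := by
      rw [hre2, abs_of_nonpos (by linarith)]; ring
    rw [le_div_iff₀ h1]
    have heq : (1 + (-a.re) * (1 / ((i : ℝ) + 1))) * ((i:ℝ) + 1) = 1 + i - a.re := by
      field_simp; ring
    rw [heq]
    nlinarith [hre, habs]
  refine le_trans ?_ step1
  rw [Finset.mul_sum]
  exact one_add_sum_le_prod (fun i => (-a.re) * (1 / (i + 1) : ℝ))
    (fun i => by positivity) N

/-- For `a ∈ ℂ` with `Re a < 0` the binomial series `∑ C(a,n) z^n`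
diverges at `z = -1`: the partial sums of `∑ (-1)^n C(a,n)` do not
converge. -/
theorem binomial_series_diverges_at_neg_one (a : ℂ) (ha : a.re < 0) :
    ¬ ∃ L : ℂ, Tendsto
      (fun N => ∑ n ∈ Finset.range N, (-1 : ℂ) ^ n * cbinom a n) atTop (nhds L) := by
  rintro ⟨L, hL⟩
  have hδ : 0 < -a.re := by linarith
  set S := fun N => ∑ n ∈ Finset.range N, (-1 : ℂ) ^ n * cbinom a n
  have h1 : Tendsto (fun N => ‖S (N + 1)‖) atTop (nhds ‖L‖) :=
    ((hL.comp (tendsto_add_atTop_nat 1)).norm)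
  have h2 : Tendsto (fun N => 1 + (-a.re) * ∑ i ∈ Finset.range N, (1 / (i + 1) : ℝ))
      atTop atTop := by
    apply tendsto_atTop_add_const_left
    exact Real.tendsto_sum_range_one_div_nat_succ_atTop.const_mul_atTop hδ
  have h3 : Tendsto (fun N => ‖S (N + 1)‖) atTop atTop := by
    refine tendsto_atTop_mono (fun N => ?_) h2
    have := norm_cbinom_ge a ha N
    have hS : ‖S (N + 1)‖ = ‖cbinom (a - 1) N‖ := by
      show ‖∑ n ∈ Finset.range (N + 1), (-1 : ℂ) ^ n * cbinom a n‖ = _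
      rw [sum_eq_cbinom]
      simp [norm_mul]
    rw [hS]; exact this
  exact not_tendsto_atTop_of_tendsto_nhds h1 h3
end

section
/- Let a ∈ ℂ, b₀ ∈ ℂ with 1+b₀ ≠ 0, and m ≥ 2 a positive integer. Consider f(z) = b₀ + z^m, and let (c_n) be defined by the generalized J.C.P. Miller recursion: c₀ = (1+b₀)^a, c₁ = 0, and c_n = (1/(n(1+b₀))) Σ_{k=1}^{n} (ka - (n-k)) b_k c_{n-k} for n ≥ 2, where b_m = 1 and b_k = 0 for k ∉ {0,m}. Then c_n = 0 unless m divides n, and for n = km with k ≥ 1, c_{km} = (a/k)(1+b₀)^{a-k} C(a-1, k-1). -/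
open Finset

lemma cbinom_zero (a : ℂ) : cbinom a 0 = 1 := by simp [cbinom]

lemma cbinom_succ (a : ℂ) (n : ℕ) :
    cbinom a (n + 1) = cbinom a n * (a - n) / (n + 1) := by
  have hfac : ((n+1).factorial : ℂ) = ((n:ℂ)+1) * n.factorial := by
    push_cast [Nat.factorial_succ]; ring
  rw [cbinom, cbinom, Finset.prod_range_succ, hfac, div_mul_eq_mul_div, div_div,
    mul_comm ((n:ℂ)+1)]

/-- **Coefficients of `B_a ∘ (b₀ + z^m)`.**  Let `a ∈ ℂ`, `b₀ ∈ ℂ` with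
`1 + b₀ ≠ 0`, and `m ≥ 2`.  Consider `f(z) = b₀ + z^m`, i.e. the
coefficients `b_k` with `b₀` in degree `0`, `b_m = 1` and `b_k = 0`
otherwise.  Let `(c_n)` be given by the generalized J.C.P. Miller
recursion: `c₀ = (1+b₀)^a`, `c₁ = 0`, and for `n ≥ 2`
`c_n = (1/(n(1+b₀))) ∑_{k=1}^n (k a - (n-k)) b_k c_{n-k}`.
Then `c_n = 0` unless `m ∣ n`, and `c_{km} = (a/k)(1+b₀)^{a-k} C(a-1,k-1)`
for every `k ≥ 1`. -/
theorem coefficients_of_binomial_comp_monomial (a b0 : ℂ) (hb0 : 1 + b0 ≠ 0)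
    (m : ℕ) (hm : 2 ≤ m) (b c : ℕ → ℂ)
    (hb : ∀ k : ℕ, b k = if k = 0 then b0 else if k = m then 1 else 0)
    (hc0 : c 0 = (1 + b0) ^ a) (hc1 : c 1 = 0)
    (hrec : ∀ n : ℕ, 2 ≤ n →
      c n = (1 / ((n : ℂ) * (1 + b0))) *
        ∑ k ∈ Finset.Icc 1 n, ((k : ℂ) * a - ((n - k : ℕ) : ℂ)) * b k * c (n - k)) :
    (∀ n : ℕ, 1 ≤ n → ¬ m ∣ n → c n = 0) ∧
      ∀ k : ℕ, 1 ≤ k →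
        c (k * m) = (a / (k : ℂ)) * (1 + b0) ^ (a - (k : ℂ)) * cbinom (a - 1) (k - 1) := by
  have step : ∀ n, 2 ≤ n → c n =
      if m ≤ n then ((m:ℂ)*a - ((n-m:ℕ):ℂ)) * c (n-m) / ((n:ℂ)*(1+b0)) else 0 := by
    intro n hn
    rw [hrec n hn]
    have hsum : ∑ k ∈ Icc 1 n, ((k:ℂ)*a - ((n-k:ℕ):ℂ)) * b k * c (n-k)
        = if m ∈ Icc 1 n then ((m:ℂ)*a - ((n-m:ℕ):ℂ)) * c (n-m) else 0 := by
      rw [← Finset.sum_ite_eq' (Icc 1 n) m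
        (fun k => ((k:ℂ)*a - ((n-k:ℕ):ℂ)) * c (n-k))]
      apply Finset.sum_congr rfl
      intro k hk
      simp only [mem_Icc] at hk
      have hk0 : k ≠ 0 := by omega
      by_cases h : k = m
      · subst h
        rw [hb, if_neg hk0, if_pos rfl, if_pos rfl, mul_one]
      · rw [hb, if_neg hk0, if_neg h, if_neg h, mul_zero, zero_mul]
    rw [hsum]
    by_cases hmn : m ≤ n
    · rw [if_pos (by simp [mem_Icc]; omega), if_pos hmn]
      ring
    · rw [if_neg (by simp [mem_Icc]; omega), if_neg hmn, mul_zero]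
  have key : ∀ n : ℕ, (1 ≤ n → ¬ m ∣ n → c n = 0) ∧
      (∀ k, 1 ≤ k → n = k * m →
        c n = (a / (k : ℂ)) * (1 + b0) ^ (a - (k : ℂ)) * cbinom (a - 1) (k - 1)) := by
    intro n
    induction n using Nat.strong_induction_on with
    | _ n ih =>
    constructor
    · intro hn hnd
      by_cases h1 : n = 1
      · rw [h1]; exact hc1
      · have hn2 : 2 ≤ n := by omega
        rw [step n hn2]
        by_cases hmn : m ≤ n
        · rw [if_pos hmn]
          have hne : n ≠ m := by rintro rfl; exact hnd dvd_rfl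
          have hnd' : ¬ m ∣ (n - m) := by
            intro hd
            apply hnd
            have := Nat.dvd_add hd (dvd_refl m)
            rwa [Nat.sub_add_cancel hmn] at this
          rw [(ih (n - m) (by omega)).1 (by omega) hnd']
          simp
        · rw [if_neg hmn]
    · intro k hk hkm
      subst hkm
      obtain ⟨j, rfl⟩ : ∃ j, k = j + 1 := ⟨k - 1, by omega⟩
      have hm0 : (m:ℂ) ≠ 0 := by exact_mod_cast (by omega : m ≠ 0)
      rcases Nat.eq_zero_or_pos j with rfl | hj
      · -- k = 1, n = m
        rw [step (1 * m) (by omega), if_pos (by omega)]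
        have h1 : 1 * m - m = 0 := by omega
        rw [h1, hc0]
        have h2 : a - ((0 + 1 : ℕ) : ℂ) = a - 1 := by push_cast; ring
        rw [h2, Complex.cpow_sub _ _ hb0, Complex.cpow_one,
          (show (0 + 1 - 1 : ℕ) = 0 from rfl), cbinom_zero]
        push_cast
        field_simp
        ring
      · -- k = j + 1 with j ≥ 1
        obtain ⟨i, rfl⟩ : ∃ i, j = i + 1 := ⟨j - 1, by omega⟩
        have hn2 : 2 ≤ (i + 1 + 1) * m := by
          have : 2 * 2 ≤ (i + 1 + 1) * m := Nat.mul_le_mul (by omega) hm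
          omega
        rw [step _ hn2, if_pos (Nat.le_mul_of_pos_left m (by omega))]
        have hsub : (i + 1 + 1) * m - m = (i + 1) * m := by
          rw [Nat.add_mul, one_mul, Nat.add_sub_cancel]
        rw [hsub]
        have hlt : (i + 1) * m < (i + 1 + 1) * m := by
          have h := Nat.add_mul (i + 1) 1 m
          omega
        rw [(ih ((i + 1) * m) hlt).2 (i + 1) (by omega) rfl]
        have hcs : (i + 1 + 1) - 1 = i + 1 := by omega
        rw [hcs, Nat.add_sub_cancel, cbinom_succ]
        have hcpow : (1 + b0) ^ (a - ((i + 1 + 1 : ℕ) : ℂ))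
            = (1 + b0) ^ (a - ((i + 1 : ℕ) : ℂ)) / (1 + b0) := by
          rw [show a - ((i + 1 + 1 : ℕ) : ℂ) = (a - ((i + 1 : ℕ) : ℂ)) - 1 by push_cast; ring,
            Complex.cpow_sub _ _ hb0, Complex.cpow_one]
        rw [hcpow]
        have hi1 : ((i:ℂ) + 1) ≠ 0 := Nat.cast_add_one_ne_zero i
        have hi2 : ((i:ℂ) + 1 + 1) ≠ 0 := by
          have h2 : ((i + 2 : ℕ) : ℂ) ≠ 0 := Nat.cast_ne_zero.mpr (by omega)
          push_cast at h2
          rwa [show ((i:ℂ) + 1 + 1) = (i:ℂ) + 2 by ring]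
        push_cast
        field_simp
        ring
  refine ⟨fun n hn hnd => (key n).1 hn hnd, fun k hk => (key (k * m)).2 k hk rfl⟩
end
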